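/- Weak-star convergence of Stieltjes integrals: let g_n, g, h : [0,T] → H be of bounded variation with h right-continuous, g_n → g uniformly on [0,T], and sup_n V(g_n,[0,T]) < ∞. Then ∫_{[0,T]} ⟨h(t), dDg_n(t)⟩ → ∫_{[0,T]} ⟨h(t), dDg(t)⟩, where Dg denotes the H-valued Lebesgue–Stieltjes (differential) measure of g. -/

import Mathlib

open Metric Set
open scoped RealInnerProductSpace

variable {H : Type*} [NormedAddCommGroup H] [InnerProductSpace ℝ H]

/-- The set of nearest points of `K` to `y`. -/
noncomputable def projSet (K : Set H) (y : H) : Set H :=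
  {x | x ∈ K ∧ ‖x - y‖ = Metric.infDist y K}

/-- The proximal normal cone to `K` at `x`. -/
def proxNormalCone (K : Set H) (x : H) : Set H :=
  {u | ∃ l : ℝ, 0 ≤ l ∧ ∃ y : H, x ∈ projSet K y ∧ u = l • (y - x)}

/-- `K` is `r`-prox-regular. -/
def IsProxRegular (r : ℝ) (K : Set H) : Prop :=
  ∀ y : H, 0 < Metric.infDist y K → Metric.infDist y K < r →
    (projSet K y).Nonempty ∧
      ∀ x ∈ projSet K y, x ∈ projSet K (x + (r / ‖y - x‖) • (y - x))

/-- The excess of `A` over `B`: `e(A,B) = sup_{a ∈ A} d(a,B)`. -/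
noncomputable def excess (A B : Set H) : ENNReal := ⨆ a ∈ A, EMetric.infEdist a B

open MeasureTheory

/-- `μ`-density pair `(μ, v)` represents the Lebesgue–Stieltjes (differential) measure of
a function `f : ℝ → H` (extended constantly outside `[0,T]`), characterized by
`Df((c,d]) = f(d+) - f(c+)` for all `c < d`. -/
def IsDiffMeasure (f : ℝ → H) (μ : Measure ℝ) (v : ℝ → H) : Prop :=
  (∀ c d : ℝ, c < d →
    (∫ s in Set.Ioc c d, v s ∂μ) = Function.rightLim f d - Function.rightLim f c)

open Filter Function
open scoped Topology
set_option linter.unusedSectionVars false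
set_option linter.unusedVariables false
set_option maxHeartbeats 1000000

section Aux
variable {H : Type*} [NormedAddCommGroup H] [InnerProductSpace ℝ H] [CompleteSpace H]

namespace StieltjesAux

variable {T : ℝ}

/-- The (real-valued) cumulative variation of `f` on `[0,T]` up to `x`. -/
noncomputable def cumVar (f : ℝ → H) (T : ℝ) (x : ℝ) : ℝ :=
  (eVariationOn f (Icc 0 T ∩ Icc 0 x)).toReal

lemma cumVar_fin (f : ℝ → H) (hBV : BoundedVariationOn f (Icc 0 T)) (x : ℝ) :
    eVariationOn f (Icc 0 T ∩ Icc 0 x) ≠ ⊤ :=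
  ((eVariationOn.mono f inter_subset_left).trans_lt hBV.lt_top).ne

lemma cumVar_mono (f : ℝ → H) (hBV : BoundedVariationOn f (Icc 0 T)) {x y : ℝ} (hxy : x ≤ y) :
    cumVar f T x ≤ cumVar f T y := by
  apply ENNReal.toReal_le_toReal (cumVar_fin f hBV x) (cumVar_fin f hBV y) |>.2
  exact eVariationOn.mono f (inter_subset_inter le_rfl (Icc_subset_Icc le_rfl hxy))

lemma dist_le_cumVar (f : ℝ → H) (hBV : BoundedVariationOn f (Icc 0 T))
    {x y : ℝ} (h0 : 0 ≤ x) (hxy : x ≤ y) (hyT : y ≤ T) :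
    dist (f x) (f y) ≤ cumVar f T y - cumVar f T x := by
  have hx : x ∈ Icc 0 T := ⟨h0, hxy.trans hyT⟩
  have hy : y ∈ Icc 0 T := ⟨h0.trans hxy, hyT⟩
  have hadd := eVariationOn.Icc_add_Icc f (a := 0) (b := x) (c := y) h0 hxy hx
  have h1 : edist (f x) (f y) ≤ eVariationOn f (Icc 0 T ∩ Icc x y) :=
    eVariationOn.edist_le f ⟨hx, le_refl x, hxy⟩ ⟨hy, hxy, le_refl y⟩
  have hfinxy : eVariationOn f (Icc 0 T ∩ Icc x y) ≠ ⊤ :=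
    ((eVariationOn.mono f inter_subset_left).trans_lt hBV.lt_top).ne
  have h2 : cumVar f T y = cumVar f T x + (eVariationOn f (Icc 0 T ∩ Icc x y)).toReal := by
    rw [cumVar, cumVar, ← hadd, ENNReal.toReal_add (cumVar_fin f hBV x) hfinxy]
  rw [dist_edist, h2]
  have h3 := ENNReal.toReal_mono hfinxy h1
  linarith

lemma tendsto_right (f : ℝ → H) (hT : 0 < T)
    (hBV : BoundedVariationOn f (Icc 0 T))
    (hext : ∀ t : ℝ, (t ≤ 0 → f t = f 0) ∧ (T ≤ t → f t = f T)) (t : ℝ) :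
    ∃ L, Tendsto f (𝓝[>] t) (𝓝 L) := by
  rcases le_or_gt T t with htT | htT
  · refine ⟨f T, Tendsto.congr' ?_ tendsto_const_nhds⟩
    filter_upwards [self_mem_nhdsWithin] with x hx
    exact ((hext x).2 (htT.trans hx.le)).symm
  rcases lt_or_ge t 0 with ht0 | ht0
  · refine ⟨f 0, Tendsto.congr' ?_ tendsto_const_nhds⟩
    filter_upwards [Ioo_mem_nhdsGT_of_mem ⟨le_refl t, ht0⟩] with x hx
    exact ((hext x).1 hx.2.le).symm
  -- main case : 0 ≤ t < T
  set w := cumVar f T with hw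
  set r := sInf (w '' Ioc t T) with hr
  have hne : (w '' Ioc t T).Nonempty := ⟨w T, mem_image_of_mem w ⟨htT, le_refl T⟩⟩
  have hbdd : BddBelow (w '' Ioc t T) := ⟨0, by rintro z ⟨x, -, rfl⟩; exact ENNReal.toReal_nonneg⟩
  have hkey : ∀ ε > 0, ∃ x₀ ∈ Ioc t T, ∀ x ∈ Ioc t x₀, ∀ y ∈ Ioc t x₀, dist (f x) (f y) ≤ ε := by
    intro ε hε
    obtain ⟨z, ⟨x₀, hx₀, rfl⟩, hz⟩ := Real.lt_sInf_add_pos hne hε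
    refine ⟨x₀, hx₀, ?_⟩
    have key : ∀ x ∈ Ioc t x₀, ∀ y ∈ Ioc t x₀, x ≤ y → dist (f x) (f y) ≤ ε := by
      intro x hx y hy hxy
      have h1 : dist (f x) (f y) ≤ w y - w x :=
        dist_le_cumVar f hBV (ht0.trans hx.1.le) hxy (hy.2.trans hx₀.2)
      have h2 : w y ≤ w x₀ := cumVar_mono f hBV hy.2
      have h3 : r ≤ w x := csInf_le hbdd (mem_image_of_mem w ⟨hx.1, hx.2.trans hx₀.2⟩)
      linarith
    intro x hx y hy
    rcases le_total x y with hxy | hxy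
    · exact key x hx y hy hxy
    · rw [dist_comm]; exact key y hy x hx hxy
  set u : ℕ → ℝ := fun k => t + (T - t) / (k + 1) with hu
  have hu_mem : ∀ k, u k ∈ Ioc t T := by
    intro k
    constructor
    · have : 0 < (T - t) / (k + 1) := div_pos (by linarith) (by positivity)
      simp only [hu]; linarith
    · have h1 : (T - t) / (k + 1) ≤ (T - t) / 1 := by
        apply div_le_div_of_nonneg_left (by linarith) one_pos
        exact_mod_cast Nat.succ_le_succ (Nat.zero_le k)
      simp only [hu]; linarith [h1]
  have hu_le : ∀ {c : ℝ}, t < c → ∃ N : ℕ, ∀ k ≥ N, u k ≤ c := by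
    intro c hc
    obtain ⟨N, hN⟩ := exists_nat_gt ((T - t) / (c - t))
    refine ⟨N, fun k hk => ?_⟩
    have hc' : 0 < c - t := by linarith
    have h1 : (T - t) / (c - t) < (k : ℝ) + 1 := by
      calc (T - t) / (c - t) < N := hN
      _ ≤ k := by exact_mod_cast hk
      _ < k + 1 := by linarith
    have h2 : (T - t) / (k + 1) ≤ c - t := by
      rw [div_le_iff₀ (by positivity)]
      rw [div_lt_iff₀ hc'] at h1
      linarith
    simp only [hu]; linarith
  have hcauchy : CauchySeq (fun k => f (u k)) := by
    rw [Metric.cauchySeq_iff']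
    intro ε hε
    obtain ⟨x₀, hx₀, hd⟩ := hkey (ε / 2) (by linarith)
    obtain ⟨N, hN⟩ := hu_le hx₀.1
    refine ⟨N, fun n hn => ?_⟩
    have h1 : u n ∈ Ioc t x₀ := ⟨(hu_mem n).1, hN n hn⟩
    have h2 : u N ∈ Ioc t x₀ := ⟨(hu_mem N).1, hN N le_rfl⟩
    exact lt_of_le_of_lt (hd _ h1 _ h2) (by linarith)
  obtain ⟨L, hL⟩ := cauchySeq_tendsto_of_complete hcauchy
  refine ⟨L, ?_⟩
  rw [Metric.tendsto_nhdsWithin_nhds]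
  intro ε hε
  obtain ⟨x₀, hx₀, hd⟩ := hkey (ε / 3) (by linarith)
  refine ⟨x₀ - t, by linarith [hx₀.1], fun {x} hx hdist => ?_⟩
  have hxmem : x ∈ Ioc t x₀ := by
    rw [Real.dist_eq, abs_of_pos (by linarith [mem_Ioi.1 hx] : (0:ℝ) < x - t)] at hdist
    exact ⟨hx, by linarith⟩
  -- pick n large
  obtain ⟨N, hN⟩ := hu_le hx₀.1
  have hlim : Tendsto (fun k => dist (f x) (f (u k))) atTop (𝓝 (dist (f x) L)) :=
    tendsto_const_nhds.dist hL
  have hev : ∀ k ≥ N, dist (f x) (f (u k)) ≤ ε / 3 := fun k hk =>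
    hd _ hxmem _ ⟨(hu_mem k).1, hN k hk⟩
  have : dist (f x) L ≤ ε / 3 :=
    le_of_tendsto hlim (eventually_atTop.2 ⟨N, fun k hk => hev k hk⟩)
  calc dist (f x) L ≤ ε / 3 := this
  _ < ε := by linarith

lemma tendsto_left (f : ℝ → H) (hT : 0 < T)
    (hBV : BoundedVariationOn f (Icc 0 T))
    (hext : ∀ t : ℝ, (t ≤ 0 → f t = f 0) ∧ (T ≤ t → f t = f T)) (t : ℝ) :
    ∃ L, Tendsto f (𝓝[<] t) (𝓝 L) := by
  rcases le_or_gt t 0 with ht0 | ht0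
  · refine ⟨f 0, Tendsto.congr' ?_ tendsto_const_nhds⟩
    filter_upwards [self_mem_nhdsWithin] with x hx
    exact ((hext x).1 (le_of_lt (lt_of_lt_of_le hx ht0))).symm
  rcases lt_or_ge T t with htT | htT
  · refine ⟨f T, Tendsto.congr' ?_ tendsto_const_nhds⟩
    filter_upwards [Ioo_mem_nhdsLT_of_mem ⟨htT, le_refl t⟩] with x hx
    exact ((hext x).2 hx.1.le).symm
  -- main case : 0 < t ≤ T
  set w := cumVar f T with hw
  set r := sSup (w '' Ico 0 t) with hr
  have hne : (w '' Ico 0 t).Nonempty := ⟨w 0, mem_image_of_mem w ⟨le_refl 0, ht0⟩⟩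
  have hbdd : BddAbove (w '' Ico 0 t) := by
    refine ⟨w T, ?_⟩
    rintro z ⟨x, hx, rfl⟩
    exact cumVar_mono f hBV (hx.2.le.trans htT)
  have hkey : ∀ ε > 0, ∃ x₀ ∈ Ico 0 t, ∀ x ∈ Ico x₀ t, ∀ y ∈ Ico x₀ t, dist (f x) (f y) ≤ ε := by
    intro ε hε
    obtain ⟨z, ⟨x₀, hx₀, rfl⟩, hz⟩ := exists_lt_of_lt_csSup hne (by linarith : r - ε < r)
    refine ⟨x₀, hx₀, ?_⟩
    have key : ∀ x ∈ Ico x₀ t, ∀ y ∈ Ico x₀ t, x ≤ y → dist (f x) (f y) ≤ ε := by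
      intro x hx y hy hxy
      have h1 : dist (f x) (f y) ≤ w y - w x :=
        dist_le_cumVar f hBV (hx₀.1.trans hx.1) hxy (hy.2.le.trans htT)
      have h2 : w y ≤ r := le_csSup hbdd (mem_image_of_mem w ⟨hx₀.1.trans hy.1, hy.2⟩)
      have h3 : w x₀ ≤ w x := cumVar_mono f hBV hx.1
      linarith
    intro x hx y hy
    rcases le_total x y with hxy | hxy
    · exact key x hx y hy hxy
    · rw [dist_comm]; exact key y hy x hx hxy
  set u : ℕ → ℝ := fun k => t - t / (k + 1) with hu
  have hu_mem : ∀ k, u k ∈ Ico 0 t := by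
    intro k
    constructor
    · have h1 : t / (k + 1) ≤ t / 1 := by
        apply div_le_div_of_nonneg_left ht0.le one_pos
        exact_mod_cast Nat.succ_le_succ (Nat.zero_le k)
      simp only [hu]; linarith
    · have : 0 < t / (k + 1) := div_pos ht0 (by positivity)
      simp only [hu]; linarith
  have hu_ge : ∀ {c : ℝ}, c < t → ∃ N : ℕ, ∀ k ≥ N, c ≤ u k := by
    intro c hc
    obtain ⟨N, hN⟩ := exists_nat_gt (t / (t - c))
    refine ⟨N, fun k hk => ?_⟩
    have hc' : 0 < t - c := by linarith
    have h1 : t / (t - c) < (k : ℝ) + 1 := by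
      calc t / (t - c) < N := hN
      _ ≤ k := by exact_mod_cast hk
      _ < k + 1 := by linarith
    have h2 : t / (k + 1) ≤ t - c := by
      rw [div_le_iff₀ (by positivity)]
      rw [div_lt_iff₀ hc'] at h1
      linarith
    simp only [hu]; linarith
  have hcauchy : CauchySeq (fun k => f (u k)) := by
    rw [Metric.cauchySeq_iff']
    intro ε hε
    obtain ⟨x₀, hx₀, hd⟩ := hkey (ε / 2) (by linarith)
    obtain ⟨N, hN⟩ := hu_ge hx₀.2
    refine ⟨N, fun n hn => ?_⟩
    have h1 : u n ∈ Ico x₀ t := ⟨hN n hn, (hu_mem n).2⟩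
    have h2 : u N ∈ Ico x₀ t := ⟨hN N le_rfl, (hu_mem N).2⟩
    exact lt_of_le_of_lt (hd _ h1 _ h2) (by linarith)
  obtain ⟨L, hL⟩ := cauchySeq_tendsto_of_complete hcauchy
  refine ⟨L, ?_⟩
  rw [Metric.tendsto_nhdsWithin_nhds]
  intro ε hε
  obtain ⟨x₀, hx₀, hd⟩ := hkey (ε / 3) (by linarith)
  refine ⟨t - x₀, by linarith [hx₀.2], fun {x} hx hdist => ?_⟩
  have hxmem : x ∈ Ico x₀ t := by
    rw [Real.dist_eq, abs_of_neg (by linarith [mem_Iio.1 hx] : x - t < 0)] at hdist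
    exact ⟨by linarith, hx⟩
  obtain ⟨N, hN⟩ := hu_ge hx₀.2
  have hlim : Tendsto (fun k => dist (f x) (f (u k))) atTop (𝓝 (dist (f x) L)) :=
    tendsto_const_nhds.dist hL
  have hev : ∀ k ≥ N, dist (f x) (f (u k)) ≤ ε / 3 := fun k hk =>
    hd _ hxmem _ ⟨hN k hk, (hu_mem k).2⟩
  have : dist (f x) L ≤ ε / 3 :=
    le_of_tendsto hlim (eventually_atTop.2 ⟨N, fun k hk => hev k hk⟩)
  calc dist (f x) L ≤ ε / 3 := this
  _ < ε := by linarith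

variable (f : ℝ → H) (hT : 0 < T) (hBV : BoundedVariationOn f (Icc 0 T))
  (hext : ∀ t : ℝ, (t ≤ 0 → f t = f 0) ∧ (T ≤ t → f t = f T))

include hT hBV hext

lemma tendsto_rightLim (t : ℝ) : Tendsto f (𝓝[>] t) (𝓝 (rightLim f t)) := by
  obtain ⟨L, hL⟩ := tendsto_right f hT hBV hext t
  rwa [rightLim_eq_of_tendsto hL]

lemma tendsto_leftLim (t : ℝ) : Tendsto f (𝓝[<] t) (𝓝 (leftLim f t)) := by
  obtain ⟨L, hL⟩ := tendsto_left f hT hBV hext t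
  rwa [leftLim_eq_of_tendsto hL]

omit hT hBV in
lemma rightLim_of_neg {t : ℝ} (ht : t < 0) : rightLim f t = f 0 := by
  refine rightLim_eq_of_tendsto (Tendsto.congr' ?_ tendsto_const_nhds)
  filter_upwards [Ioo_mem_nhdsGT_of_mem ⟨le_refl t, ht⟩] with x hx
  exact ((hext x).1 hx.2.le).symm

omit hT hBV in
lemma rightLim_of_T_le {t : ℝ} (ht : T ≤ t) : rightLim f t = f T := by
  refine rightLim_eq_of_tendsto (Tendsto.congr' ?_ tendsto_const_nhds)
  filter_upwards [self_mem_nhdsWithin] with x hx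
  exact ((hext x).2 (ht.trans hx.le)).symm

omit hT hBV in
lemma leftLim_of_nonpos {t : ℝ} (ht : t ≤ 0) : leftLim f t = f 0 := by
  refine leftLim_eq_of_tendsto (Tendsto.congr' ?_ tendsto_const_nhds)
  filter_upwards [self_mem_nhdsWithin] with x hx
  exact ((hext x).1 (le_of_lt (lt_of_lt_of_le hx ht))).symm

/-- The right-limit regularization converges to the left limit from the left. -/
lemma tendsto_rightLim_leftLim {t : ℝ} (ht : t ≤ T) :
    Tendsto (rightLim f) (𝓝[<] t) (𝓝 (leftLim f t)) := by
  rcases le_or_gt t 0 with ht0 | ht0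
  · rw [leftLim_of_nonpos f hext ht0]
    refine Tendsto.congr' ?_ tendsto_const_nhds
    filter_upwards [self_mem_nhdsWithin] with x hx
    exact (rightLim_of_neg f hext (lt_of_lt_of_le hx ht0)).symm
  · -- 0 < t ≤ T
    have hLt := tendsto_leftLim f hT hBV hext t
    rw [Metric.tendsto_nhdsWithin_nhds] at hLt ⊢
    intro ε hε
    obtain ⟨δ, hδ, hd⟩ := hLt (ε / 2) (by linarith)
    refine ⟨δ, hδ, fun {s} hs hdist => ?_⟩
    have h1 : Tendsto (fun x => dist (f x) (leftLim f t)) (𝓝[>] s)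
        (𝓝 (dist (rightLim f s) (leftLim f t))) :=
      (tendsto_rightLim f hT hBV hext s).dist tendsto_const_nhds
    have h2 : dist (rightLim f s) (leftLim f t) ≤ ε / 2 := by
      refine le_of_tendsto h1 ?_
      filter_upwards [Ioo_mem_nhdsGT_of_mem ⟨le_refl s, hs⟩] with x hx
      refine (hd hx.2 ?_).le
      rw [Real.dist_eq, abs_of_neg (by linarith [hx.1, hx.2] : x - t < 0)]
      rw [Real.dist_eq, abs_of_neg (by linarith [mem_Iio.1 hs] : s - t < 0)] at hdist
      linarith [hx.1]
    linarith [h2]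

section Nu
variable {E : Type*} [NormedAddCommGroup E] [NormedSpace ℝ E]
variable (μ : Measure ℝ) (hconc : μ (Icc 0 T)ᶜ = 0)

omit hT hBV hext in
include hconc in
lemma setIntegral_inter_Icc (F : ℝ → E) (A : Set ℝ) :
    ∫ x in A, F x ∂μ = ∫ x in A ∩ Icc 0 T, F x ∂μ := by
  apply setIntegral_congr_set
  rw [MeasureTheory.ae_eq_set]
  constructor
  · refine measure_mono_null (fun x hx => ?_) hconc
    rcases hx with ⟨hxA, hx2⟩
    intro hmem
    exact hx2 ⟨hxA, hmem⟩
  · have : (A ∩ Icc 0 T) \ A = ∅ := by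
      ext x; simp only [mem_diff, mem_inter_iff, mem_empty_iff_false, iff_false]; tauto
    rw [this]; exact measure_empty

variable (v : ℝ → H) [IsFiniteMeasure μ] (hv : Integrable v μ)
  (hD : ∀ c d : ℝ, c < d → (∫ s in Ioc c d, v s ∂μ) = rightLim f d - rightLim f c)

include hT hBV hext hv hD in
lemma nu_singleton {t : ℝ} (ht : t ∈ Icc 0 T) :
    ∫ x in {t}, v x ∂μ = rightLim f t - leftLim f t := by
  set A : ℕ → Set ℝ := fun k => Ioc (t - 1 / (k + 1)) t with hA
  have hanti : Antitone A := by
    intro i j hij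
    apply Ioc_subset_Ioc_left
    have : (1:ℝ) / (j + 1) ≤ 1 / (i + 1) := by
      apply div_le_div_of_nonneg_left one_pos.le (by positivity)
      exact_mod_cast Nat.succ_le_succ hij
    linarith
  have hInt : ⋂ k, A k = {t} := by
    ext x
    simp only [mem_iInter, mem_singleton_iff, hA, mem_Ioc]
    constructor
    · intro hx
      have hxt : x ≤ t := (hx 0).2
      rcases eq_or_lt_of_le hxt with h | h
      · exact h
      · obtain ⟨k, hk⟩ := exists_nat_one_div_lt (by linarith : 0 < t - x)
        exact absurd (hx k).1 (by push_cast; linarith)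
    · rintro rfl
      intro k
      have hpos : 0 < 1 / ((k:ℝ) + 1) := by positivity
      exact ⟨by linarith, le_rfl⟩
  have h1 : Tendsto (fun k => ∫ x in A k, v x ∂μ) atTop (𝓝 (∫ x in {t}, v x ∂μ)) := by
    rw [← hInt]
    exact tendsto_setIntegral_of_antitone (fun k => measurableSet_Ioc) hanti ⟨0, hv.integrableOn⟩
  have h2 : ∀ k, ∫ x in A k, v x ∂μ = rightLim f t - rightLim f (t - 1 / (k + 1)) := by
    intro k
    apply hD
    have hpos : 0 < 1 / ((k:ℝ) + 1) := by positivity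
    linarith
  have h3 : Tendsto (fun k : ℕ => t - 1 / (k + 1)) atTop (𝓝[<] t) := by
    apply tendsto_nhdsWithin_of_tendsto_nhds_of_eventually_within
    · have := tendsto_one_div_add_atTop_nhds_zero_nat (𝕜 := ℝ)
      have h := tendsto_const_nhds (x := t) (f := atTop (α := ℕ)) |>.sub this
      simpa using h
    · filter_upwards with k
      have : 0 < 1 / ((k:ℝ) + 1) := by positivity
      simp only [mem_Iio]; linarith
  have h4 : Tendsto (fun k : ℕ => rightLim f (t - 1 / (k + 1))) atTop (𝓝 (leftLim f t)) :=
    (tendsto_rightLim_leftLim f hT hBV hext ht.2).comp h3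
  have h5 : Tendsto (fun k => ∫ x in A k, v x ∂μ) atTop (𝓝 (rightLim f t - leftLim f t)) := by
    simp only [h2]
    exact tendsto_const_nhds.sub h4
  exact tendsto_nhds_unique h1 h5

include hT hBV hext hv hD in
lemma nu_Ioo {a b : ℝ} (ha : 0 ≤ a) (hab : a < b) (hbT : b ≤ T) :
    ∫ x in Ioo a b, v x ∂μ = leftLim f b - rightLim f a := by
  have hsplit : Ioc a b = Ioo a b ∪ {b} := by
    rw [← Ioo_union_Icc_eq_Ioc hab (le_refl b), Icc_self]
  have hdisj : Disjoint (Ioo a b) {b} := by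
    simp only [disjoint_singleton_right, mem_Ioo]
    intro h; exact absurd h.2 (lt_irrefl b)
  have h1 : ∫ x in Ioc a b, v x ∂μ = (∫ x in Ioo a b, v x ∂μ) + ∫ x in {b}, v x ∂μ := by
    rw [hsplit]
    exact setIntegral_union hdisj (measurableSet_singleton b) hv.integrableOn hv.integrableOn
  have h2 := hD a b hab
  have h3 := nu_singleton f hT hBV hext μ v hv hD ⟨ha.trans hab.le, hbT⟩
  rw [h2, h3] at h1
  have h4 : ∫ (x : ℝ) in Ioo a b, v x ∂μ
      = (rightLim f b - rightLim f a) - (rightLim f b - leftLim f b) := by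
    rw [h1]; abel
  rw [h4]; abel

end Nu
include hT hBV hext in
lemma piece_bound {x y : ℝ} (hx : x ∈ Icc 0 T) (hy : y ∈ Icc 0 T) (hxy : x < y) :
    ‖rightLim f x - f x‖ + ‖leftLim f y - rightLim f x‖ + ‖f y - leftLim f y‖
      ≤ (eVariationOn f (Icc 0 T ∩ Icc x y)).toReal := by
  have hfin : eVariationOn f (Icc 0 T ∩ Icc x y) ≠ ⊤ :=
    ((eVariationOn.mono f inter_subset_left).trans_lt hBV.lt_top).ne
  refine le_of_forall_pos_le_add fun ε hε => ?_
  -- choose a near x from the right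
  have hra := tendsto_rightLim f hT hBV hext x
  have hevr : ∀ᶠ s in 𝓝[>] x, dist (f s) (rightLim f x) < ε / 4 :=
    hra (Metric.ball_mem_nhds _ (by linarith))
  obtain ⟨a, had, haIoo⟩ := (hevr.and (Ioo_mem_nhdsGT_of_mem ⟨le_refl x, hxy⟩)).exists
  -- choose b near y from the left, above a
  have hlb := tendsto_leftLim f hT hBV hext y
  have hevl : ∀ᶠ s in 𝓝[<] y, dist (f s) (leftLim f y) < ε / 4 :=
    hlb (Metric.ball_mem_nhds _ (by linarith))
  obtain ⟨b, hb1, hbIoo⟩ := (hevl.and (Ioo_mem_nhdsLT_of_mem ⟨haIoo.2, le_refl y⟩)).exists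
  have hbd : dist (f b) (leftLim f y) < ε / 4 := hb1
  -- the chain x ≤ a ≤ b ≤ y
  set u : ℕ → ℝ := fun i => if i = 0 then x else if i = 1 then a else if i = 2 then b else y
    with hu
  have hmono : Monotone u := by
    apply monotone_nat_of_le_succ
    intro i
    match i with
    | 0 => simp only [hu]; norm_num; exact haIoo.1.le
    | 1 => simp only [hu]; norm_num; exact hbIoo.1.le
    | 2 => simp only [hu]; norm_num; exact hbIoo.2.le
    | (n+3) =>
      have h1 : n + 3 ≠ 0 := by omega
      have h2 : n + 3 ≠ 1 := by omega
      have h3 : n + 3 ≠ 2 := by omega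
      have h4 : n + 3 + 1 ≠ 0 := by omega
      have h5 : n + 3 + 1 ≠ 1 := by omega
      have h6 : n + 3 + 1 ≠ 2 := by omega
      simp only [hu, if_neg h1, if_neg h2, if_neg h3, if_neg h4, if_neg h5, if_neg h6, le_refl]
  have hmem : ∀ i, u i ∈ Icc 0 T ∩ Icc x y := by
    have hamem : a ∈ Icc 0 T ∩ Icc x y :=
      ⟨⟨hx.1.trans haIoo.1.le, haIoo.2.le.trans hy.2⟩, haIoo.1.le, haIoo.2.le⟩
    have hbmem : b ∈ Icc 0 T ∩ Icc x y :=
      ⟨⟨hx.1.trans (haIoo.1.trans hbIoo.1).le, hbIoo.2.le.trans hy.2⟩,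
        (haIoo.1.trans hbIoo.1).le, hbIoo.2.le⟩
    intro i
    match i with
    | 0 => exact ⟨hx, le_refl x, hxy.le⟩
    | 1 => exact hamem
    | 2 => exact hbmem
    | (n+3) => exact ⟨hy, hxy.le, le_refl y⟩
  have hsum := eVariationOn.sum_le (f := f) (n := 3) hmono hmem
  have hexp : ∑ i ∈ Finset.range 3, edist (f (u (i + 1))) (f (u i))
      = edist (f a) (f x) + edist (f b) (f a) + edist (f y) (f b) := by
    rw [Finset.sum_range_succ, Finset.sum_range_succ, Finset.sum_range_one]
    simp only [hu]
    norm_num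
  rw [hexp] at hsum
  have hreal : dist (f a) (f x) + dist (f b) (f a) + dist (f y) (f b)
      ≤ (eVariationOn f (Icc 0 T ∩ Icc x y)).toReal := by
    have h1 := ENNReal.toReal_mono hfin hsum
    rw [ENNReal.toReal_add, ENNReal.toReal_add] at h1
    · simpa only [← dist_edist] using h1
    all_goals first
      | exact edist_ne_top _ _
      | exact (ENNReal.add_lt_top.2 ⟨(edist_lt_top _ _), (edist_lt_top _ _)⟩).ne
  have t1 : ‖rightLim f x - f x‖ ≤ dist (f a) (f x) + ε / 4 := by
    have := dist_triangle (rightLim f x) (f a) (f x)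
    rw [← dist_eq_norm]
    rw [dist_comm] at had
    linarith [this, had.le]
  have t2 : ‖leftLim f y - rightLim f x‖ ≤ dist (f b) (f a) + ε / 2 := by
    have h1 := dist_triangle (leftLim f y) (f b) (f a)
    have h2 := dist_triangle (f b) (f a) (rightLim f x)
    rw [← dist_eq_norm]
    have h3 := dist_triangle (leftLim f y) (f a) (rightLim f x)
    rw [dist_comm (f b) (leftLim f y)] at hbd
    rw [dist_comm (f a) (rightLim f x)] at had
    calc dist (leftLim f y) (rightLim f x)
        ≤ dist (leftLim f y) (f b) + dist (f b) (rightLim f x) :=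
          dist_triangle _ _ _
      _ ≤ dist (leftLim f y) (f b) + (dist (f b) (f a) + dist (f a) (rightLim f x)) := by
          linarith [dist_triangle (f b) (f a) (rightLim f x)]
      _ ≤ dist (f b) (f a) + ε / 2 := by
          linarith [hbd.le, had.le, dist_comm (f a) (rightLim f x)]
  have t3 : ‖f y - leftLim f y‖ ≤ dist (f y) (f b) + ε / 4 := by
    rw [← dist_eq_norm]
    calc dist (f y) (leftLim f y) ≤ dist (f y) (f b) + dist (f b) (leftLim f y) :=
      dist_triangle _ _ _
    _ ≤ dist (f y) (f b) + ε / 4 := by linarith [hbd.le]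
  linarith

omit hT hBV hext in
lemma q_mono_aux (q : ℕ → ℝ) : ∀ m : ℕ, (∀ i < m, q i < q (i + 1)) → q 0 ≤ q m := by
  intro m
  induction m with
  | zero => intro _; exact le_rfl
  | succ k ihk =>
    intro h
    exact (ihk (fun i hi => h i (by omega))).trans (h k (by omega)).le

include hT hBV hext in
lemma chain_bound (m : ℕ) (q : ℕ → ℝ) (hq0 : q 0 = 0)
    (hmono : ∀ i < m, q i < q (i + 1)) (hmem : ∀ i ≤ m, q i ∈ Icc 0 T) :
    (∑ i ∈ Finset.range (m + 1), ‖rightLim f (q i) - leftLim f (q i)‖)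
      + ∑ i ∈ Finset.range m, ‖leftLim f (q (i + 1)) - rightLim f (q i)‖
      ≤ (eVariationOn f (Icc 0 T ∩ Icc 0 (q m))).toReal + ‖rightLim f (q m) - f (q m)‖ := by
  induction m with
  | zero =>
    simp only [zero_add, Finset.sum_range_one, Finset.range_zero, Finset.sum_empty, add_zero]
    have hL0 : leftLim f (q 0) = f (q 0) := by
      rw [hq0]; exact leftLim_of_nonpos f hext le_rfl
    rw [hL0]
    have hsub : eVariationOn f (Icc 0 T ∩ Icc 0 (q 0)) = 0 := by
      apply eVariationOn.subsingleton
      intro x hx y hy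
      rw [hq0] at hx hy
      have hx0 : x = 0 := le_antisymm hx.2.2 hx.2.1
      have hy0 : y = 0 := le_antisymm hy.2.2 hy.2.1
      rw [hx0, hy0]
    rw [hsub]
    simp
  | succ m ih =>
    have hmono' : ∀ i < m, q i < q (i + 1) := fun i hi => hmono i (hi.trans (Nat.lt_succ_self m))
    have hmem' : ∀ i ≤ m, q i ∈ Icc 0 T := fun i hi => hmem i (hi.trans (Nat.le_succ m))
    have IH := ih hmono' hmem'
    have hqm : q m ∈ Icc 0 T := hmem m (Nat.le_succ m)
    have hqm1 : q (m + 1) ∈ Icc 0 T := hmem (m + 1) le_rfl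
    have hlt : q m < q (m + 1) := hmono m (Nat.lt_succ_self m)
    have hpb := piece_bound f hT hBV hext hqm hqm1 hlt
    -- additivity of variation
    have hq0m : q 0 ≤ q m := q_mono_aux q m hmono'
    have hadd := eVariationOn.Icc_add_Icc f (a := (0:ℝ)) (b := q m) (c := q (m+1))
      (by rw [← hq0]; exact hq0m) hlt.le hqm
    have hfin1 : eVariationOn f (Icc 0 T ∩ Icc 0 (q m)) ≠ ⊤ :=
      ((eVariationOn.mono f inter_subset_left).trans_lt hBV.lt_top).ne
    have hfin2 : eVariationOn f (Icc 0 T ∩ Icc (q m) (q (m+1))) ≠ ⊤ :=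
      ((eVariationOn.mono f inter_subset_left).trans_lt hBV.lt_top).ne
    have haddR : (eVariationOn f (Icc 0 T ∩ Icc 0 (q (m+1)))).toReal
        = (eVariationOn f (Icc 0 T ∩ Icc 0 (q m))).toReal
          + (eVariationOn f (Icc 0 T ∩ Icc (q m) (q (m+1)))).toReal := by
      rw [← hadd, ENNReal.toReal_add hfin1 hfin2]
    -- triangle for the last jump
    have htri : ‖rightLim f (q (m+1)) - leftLim f (q (m+1))‖
        ≤ ‖f (q (m+1)) - leftLim f (q (m+1))‖ + ‖rightLim f (q (m+1)) - f (q (m+1))‖ := by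
      have := norm_sub_le_norm_sub_add_norm_sub (rightLim f (q (m+1))) (f (q (m+1)))
        (leftLim f (q (m+1)))
      calc ‖rightLim f (q (m+1)) - leftLim f (q (m+1))‖
          ≤ ‖rightLim f (q (m+1)) - f (q (m+1))‖ + ‖f (q (m+1)) - leftLim f (q (m+1))‖ := this
        _ = _ := by ring
    have e1 := Finset.sum_range_succ (fun i => ‖rightLim f (q i) - leftLim f (q i)‖) (m + 1)
    have e2 := Finset.sum_range_succ (fun i => ‖leftLim f (q (i + 1)) - rightLim f (q i)‖) m
    rw [e1, e2]
    linarith [IH, hpb, htri, haddR]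

section Partition

/-- Next partition point after `p`. -/
noncomputable def nxt (P : Finset ℝ) (p : ℝ) : ℝ :=
  if h : (P.filter (fun q => p < q)).Nonempty then (P.filter (fun q => p < q)).min' h else p

omit hT hBV hext in
lemma nxt_eq_of {P : Finset ℝ} {p r : ℝ} (hr : r ∈ P) (hpr : p < r)
    (hmin : ∀ q ∈ P, p < q → r ≤ q) : nxt P p = r := by
  have hne : (P.filter (fun q => p < q)).Nonempty := ⟨r, Finset.mem_filter.2 ⟨hr, hpr⟩⟩
  rw [nxt, dif_pos hne]
  apply le_antisymm
  · exact Finset.min'_le _ r (Finset.mem_filter.2 ⟨hr, hpr⟩)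
  · have hm := Finset.min'_mem _ hne
    rw [Finset.mem_filter] at hm
    exact hmin _ hm.1 hm.2

omit hT hBV hext in
lemma nxt_gt {P : Finset ℝ} {p : ℝ} (h : (P.filter (fun q => p < q)).Nonempty) :
    p < nxt P p := by
  rw [nxt, dif_pos h]
  have hm := Finset.min'_mem _ h
  rw [Finset.mem_filter] at hm
  exact hm.2

omit hT hBV hext in
lemma nxt_le {P : Finset ℝ} {p q : ℝ} (hq : q ∈ P) (hpq : p < q) : nxt P p ≤ q := by
  have hne : (P.filter (fun r => p < r)).Nonempty := ⟨q, Finset.mem_filter.2 ⟨hq, hpq⟩⟩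
  rw [nxt, dif_pos hne]
  exact Finset.min'_le _ q (Finset.mem_filter.2 ⟨hq, hpq⟩)

omit hT hBV hext in
lemma nxt_gt_of_not_mem_between {P : Finset ℝ} {p x : ℝ} (hpx : p ≤ x)
    (hno : ∀ q ∈ P, ¬(p < q ∧ q ≤ x)) (hex : ∃ q ∈ P, x < q) : x < nxt P p := by
  obtain ⟨q, hq, hxq⟩ := hex
  have hne : (P.filter (fun r => p < r)).Nonempty :=
    ⟨q, Finset.mem_filter.2 ⟨hq, lt_of_le_of_lt hpx hxq⟩⟩
  rw [nxt, dif_pos hne]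
  by_contra hc
  push_neg at hc
  have hm := Finset.min'_mem _ hne
  rw [Finset.mem_filter] at hm
  exact hno _ hm.1 ⟨hm.2, hc⟩

omit hT hBV hext in
lemma nxt_union {P G : Finset ℝ} {p b : ℝ} (hp : p ∈ P) (hb : b ∈ P) (hpb : p < b)
    (hG : ∀ g ∈ G, b < g) : nxt (P ∪ G) p = nxt P p := by
  have hnxt_le_b : nxt P p ≤ b := nxt_le hb hpb
  have hne : (P.filter (fun q => p < q)).Nonempty := ⟨b, Finset.mem_filter.2 ⟨hb, hpb⟩⟩
  have hmem : nxt P p ∈ P := by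
    rw [nxt, dif_pos hne]
    have := Finset.min'_mem _ hne
    rw [Finset.mem_filter] at this
    exact this.1
  have hgt : p < nxt P p := nxt_gt hne
  apply nxt_eq_of (Finset.mem_union_left _ hmem) hgt
  intro q hq hpq
  rcases Finset.mem_union.1 hq with hqP | hqG
  · -- q ∈ P
    have hne' : (P.filter (fun r => p < r)).Nonempty := hne
    rw [nxt, dif_pos hne']
    exact Finset.min'_le _ q (Finset.mem_filter.2 ⟨hqP, hpq⟩)
  · exact hnxt_le_b.trans (hG q hqG).le

/-- Largest partition point `≤ x`. -/
noncomputable def partPt (P : Finset ℝ) (x : ℝ) : ℝ :=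
  if h : (P.filter (fun p => p ≤ x)).Nonempty then (P.filter (fun p => p ≤ x)).max' h else 0

omit hT hBV hext in
lemma partPt_spec {P : Finset ℝ} {x : ℝ} (h0 : (0:ℝ) ∈ P) (hx : 0 ≤ x) :
    partPt P x ∈ P ∧ partPt P x ≤ x ∧ ∀ p ∈ P, p ≤ x → p ≤ partPt P x := by
  have hne : (P.filter (fun p => p ≤ x)).Nonempty := ⟨0, Finset.mem_filter.2 ⟨h0, hx⟩⟩
  rw [partPt, dif_pos hne]
  have hm := Finset.max'_mem _ hne
  rw [Finset.mem_filter] at hm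
  exact ⟨hm.1, hm.2, fun p hp hpx =>
    Finset.le_max' (P.filter (fun p => p ≤ x)) p (Finset.mem_filter.2 ⟨hp, hpx⟩)⟩

omit hT hBV hext in
lemma partPt_self {P : Finset ℝ} {x : ℝ} (h0 : (0:ℝ) ∈ P) (hxP : x ∈ P) (hx : 0 ≤ x) :
    partPt P x = x := by
  obtain ⟨h1, h2, h3⟩ := partPt_spec h0 hx
  exact le_antisymm h2 (h3 x hxP le_rfl)

omit hT hBV hext in
lemma partPt_cases {P : Finset ℝ} {x : ℝ} (h0 : (0:ℝ) ∈ P) (hTP : T ∈ P)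
    (hx : x ∈ Icc 0 T) :
    x = partPt P x ∨ (partPt P x < x ∧ x < nxt P (partPt P x)) := by
  obtain ⟨h1, h2, h3⟩ := partPt_spec h0 hx.1
  rcases eq_or_lt_of_le h2 with h | h
  · exact Or.inl h.symm
  · right
    refine ⟨h, ?_⟩
    rcases eq_or_lt_of_le hx.2 with hxT | hxT
    · exfalso
      have hTle := h3 T hTP (le_of_eq hxT.symm)
      exact absurd (lt_of_le_of_lt hTle h) (not_lt.2 hx.2)
    · apply nxt_gt_of_not_mem_between h2 _ ⟨T, hTP, hxT⟩
      intro q hq hq12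
      have hle := h3 q hq hq12.2
      exact absurd (lt_of_lt_of_le hq12.1 hle) (lt_irrefl _)

end Partition

section PartitionExists

omit hT hBV hext in
lemma nxt_eq_self {P : Finset ℝ} {p : ℝ} (hno : ∀ q ∈ P, ¬ p < q) : nxt P p = p := by
  have : ¬ (P.filter (fun q => p < q)).Nonempty := by
    rintro ⟨q, hq⟩
    rw [Finset.mem_filter] at hq
    exact hno q hq.1 hq.2
  rw [nxt, dif_neg this]

/-- A valid `ε`-partition of `[0,b]` containing the mandatory points of `F` below `b`. -/
def good (f : ℝ → H) (F : Finset ℝ) (ε b : ℝ) (P : Finset ℝ) : Prop :=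
  (0:ℝ) ∈ P ∧ b ∈ P ∧ ↑P ⊆ Icc 0 b ∧ (∀ x ∈ F, x ≤ b → x ∈ P) ∧
    ∀ p ∈ P, ∀ x ∈ Ioo p (nxt P p), ‖f x - f p‖ ≤ ε

omit hT hBV hext in
lemma good_extend {F : Finset ℝ} {ε b c : ℝ} {P : Finset ℝ}
    (hg : good f F ε b P) (hbc : b < c)
    (hosc : ∀ p ∈ insert b (insert c (F.filter (fun x => b < x ∧ x ≤ c))),
      ∀ x ∈ Ioo p c, ‖f x - f p‖ ≤ ε) :
    good f F ε c (P ∪ insert c (F.filter (fun x => b < x ∧ x ≤ c))) := by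
  obtain ⟨h0P, hbP, hPsub, hFP, hoscP⟩ := hg
  set G : Finset ℝ := insert c (F.filter (fun x => b < x ∧ x ≤ c)) with hG
  have hGgt : ∀ g ∈ G, b < g := by
    intro g hgmem
    rcases Finset.mem_insert.1 hgmem with rfl | hgF
    · exact hbc
    · exact (Finset.mem_filter.1 hgF).2.1
  have hGle : ∀ g ∈ G, g ≤ c := by
    intro g hgmem
    rcases Finset.mem_insert.1 hgmem with rfl | hgF
    · exact le_rfl
    · exact (Finset.mem_filter.1 hgF).2.2
  have hb0 : 0 ≤ b := (hPsub hbP).1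
  refine ⟨Finset.mem_union_left _ h0P, Finset.mem_union_right _ (Finset.mem_insert_self c _),
    ?_, ?_, ?_⟩
  · intro p hp
    rcases Finset.mem_coe.1 hp |> Finset.mem_union.1 with hpP | hpG
    · have := hPsub hpP
      exact ⟨this.1, this.2.trans hbc.le⟩
    · exact ⟨hb0.trans (hGgt p hpG).le, hGle p hpG⟩
  · intro x hxF hxc
    rcases le_or_gt x b with hxb | hxb
    · exact Finset.mem_union_left _ (hFP x hxF hxb)
    · exact Finset.mem_union_right _ (Finset.mem_insert_of_mem
        (Finset.mem_filter.2 ⟨hxF, hxb, hxc⟩))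
  · intro p hp x hx
    rcases Finset.mem_union.1 hp with hpP | hpG
    · rcases eq_or_lt_of_le (hPsub hpP).2 with hpb | hpb
      · -- p = b
        have hnle : nxt (P ∪ G) p ≤ c :=
          nxt_le (Finset.mem_union_right _ (Finset.mem_insert_self c _)) (hpb ▸ hbc)
        refine hosc p (by rw [hpb]; exact Finset.mem_insert_self _ _) x ⟨hx.1, hx.2.trans_le hnle⟩
      · -- p < b
        rw [nxt_union hpP hbP hpb hGgt] at hx
        exact hoscP p hpP x hx
    · rcases eq_or_lt_of_le (hGle p hpG) with hpc | hpc
      · -- p = c : no points beyond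
        exfalso
        have hnone : ∀ q ∈ P ∪ G, ¬ p < q := by
          intro q hq
          rcases Finset.mem_union.1 hq with hqP | hqG
          · have := (hPsub hqP).2
            rw [hpc]
            exact not_lt.2 (this.trans hbc.le)
          · rw [hpc]; exact not_lt.2 (hGle q hqG)
        rw [nxt_eq_self hnone] at hx
        exact absurd hx.2 (not_lt.2 hx.1.le)
      · have hnle : nxt (P ∪ G) p ≤ c :=
          nxt_le (Finset.mem_union_right _ (Finset.mem_insert_self c _)) hpc
        exact hosc p (Finset.mem_insert_of_mem hpG) x ⟨hx.1, hx.2.trans_le hnle⟩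

include hT hBV hext in
lemma exists_good_partition (hrc : ∀ t ∈ Ico (0:ℝ) T, ContinuousWithinAt f (Ici t) t)
    (F : Finset ℝ) (hF : ↑F ⊆ Icc (0:ℝ) T) {ε : ℝ} (hε : 0 < ε) :
    ∃ P : Finset ℝ, (0:ℝ) ∈ P ∧ T ∈ P ∧ ↑P ⊆ Icc (0:ℝ) T ∧ F ⊆ P ∧
      ∀ p ∈ P, ∀ x ∈ Ioo p (nxt P p), ‖f x - f p‖ ≤ ε := by
  set S := {b : ℝ | b ∈ Icc (0:ℝ) T ∧ ∃ P : Finset ℝ, good f F ε b P} with hS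
  have hS0 : (0:ℝ) ∈ S := by
    refine ⟨⟨le_rfl, hT.le⟩, {0}, Finset.mem_singleton_self 0, Finset.mem_singleton_self 0,
      ?_, ?_, ?_⟩
    · intro p hp
      rw [Finset.coe_singleton, mem_singleton_iff] at hp
      rw [hp]; exact ⟨le_rfl, le_rfl⟩
    · intro x hxF hx0
      have := (hF hxF).1
      have hx : x = 0 := le_antisymm hx0 this
      rw [hx]; exact Finset.mem_singleton_self 0
    · intro p hp x hx
      rw [Finset.mem_singleton] at hp
      subst hp
      rw [nxt_eq_self (fun q hq => by rw [Finset.mem_singleton] at hq; rw [hq]; exact lt_irrefl 0)] at hx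
      exact absurd hx.2 (not_lt.2 hx.1.le)
  have hSne : S.Nonempty := ⟨0, hS0⟩
  have hbdd : BddAbove S := ⟨T, fun b hb => hb.1.2⟩
  set b₀ := sSup S with hb₀
  have hb00 : 0 ≤ b₀ := le_csSup hbdd hS0
  have hb0T : b₀ ≤ T := csSup_le hSne (fun b hb => hb.1.2)
  have hstep1 : b₀ ∈ S := by
    rcases eq_or_lt_of_le hb00 with h0b | h0b
    · rw [← h0b]; exact hS0
    · -- use the left limit at b₀
      have hLL := tendsto_leftLim f hT hBV hext b₀
      rw [Metric.tendsto_nhdsWithin_nhds] at hLL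
      obtain ⟨δ, hδpos, hδ⟩ := hLL (ε/2) (by linarith)
      have hδ'pos : 0 < min δ b₀ := lt_min hδpos h0b
      obtain ⟨a, haS, halt⟩ := exists_lt_of_lt_csSup hSne
        (by linarith : b₀ - min δ b₀ < b₀)
      have hab : a ≤ b₀ := le_csSup hbdd haS
      rcases eq_or_lt_of_le hab with haeq | halt2
      · rw [← haeq]; exact haS
      · obtain ⟨-, P, hgood⟩ := haS
        have hosc : ∀ p ∈ insert a (insert b₀ (F.filter (fun x => a < x ∧ x ≤ b₀))),
            ∀ x ∈ Ioo p b₀, ‖f x - f p‖ ≤ ε := by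
          intro p hp x hx
          have hpa : a ≤ p := by
            rcases Finset.mem_insert.1 hp with rfl | hp'
            · exact le_rfl
            · rcases Finset.mem_insert.1 hp' with rfl | hp''
              · exact hab
              · exact (Finset.mem_filter.1 hp'').2.1.le
          have hpb : p < b₀ := hx.1.trans hx.2
          have hxband : x ∈ Iio b₀ := hx.2
          have hd1 : dist (f x) (leftLim f b₀) < ε/2 := by
            apply hδ hxband
            rw [Real.dist_eq, abs_of_neg (by linarith [hx.2] : x - b₀ < 0)]
            have : b₀ - min δ b₀ < x := by linarith [halt, hpa, hx.1]
            have hmin : min δ b₀ ≤ δ := min_le_left _ _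
            linarith
          have hd2 : dist (f p) (leftLim f b₀) < ε/2 := by
            apply hδ (mem_Iio.2 hpb)
            rw [Real.dist_eq, abs_of_neg (by linarith : p - b₀ < 0)]
            have : b₀ - min δ b₀ < p := by linarith [halt, hpa]
            have hmin : min δ b₀ ≤ δ := min_le_left _ _
            linarith
          calc ‖f x - f p‖ = dist (f x) (f p) := (dist_eq_norm _ _).symm
            _ ≤ dist (f x) (leftLim f b₀) + dist (leftLim f b₀) (f p) := dist_triangle _ _ _
            _ ≤ ε/2 + ε/2 := by
                rw [dist_comm (leftLim f b₀) (f p)]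
                exact add_le_add hd1.le hd2.le
            _ = ε := by ring
        exact ⟨⟨hb00, hb0T⟩, _, good_extend f hgood halt2 hosc⟩
  rcases eq_or_lt_of_le hb0T with hb0T' | hb0T'
  · obtain ⟨-, P, hgood⟩ := hstep1
    rw [hb0T'] at hgood
    obtain ⟨h0P, hTP, hPsub, hFP, hosc⟩ := hgood
    exact ⟨P, h0P, hTP, hPsub, fun x hx => hFP x hx (hF hx).2, hosc⟩
  · -- b₀ < T : contradiction with right continuity
    exfalso
    have hco := hrc b₀ ⟨hb00, hb0T'⟩
    rw [ContinuousWithinAt, Metric.tendsto_nhdsWithin_nhds] at hco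
    obtain ⟨δ, hδpos, hδ⟩ := hco (ε/2) (by linarith)
    set b' := min (b₀ + δ/2) T with hb'
    have hb'gt : b₀ < b' := lt_min (by linarith) hb0T'
    have hb'T : b' ≤ T := min_le_right _ _
    have hb'δ : b' - b₀ < δ := by
      have : b' ≤ b₀ + δ/2 := min_le_left _ _
      linarith
    obtain ⟨-, P, hgood⟩ := hstep1
    have hosc : ∀ p ∈ insert b₀ (insert b' (F.filter (fun x => b₀ < x ∧ x ≤ b'))),
        ∀ x ∈ Ioo p b', ‖f x - f p‖ ≤ ε := by
      intro p hp x hx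
      have hpb : b₀ ≤ p := by
        rcases Finset.mem_insert.1 hp with rfl | hp'
        · exact le_rfl
        · rcases Finset.mem_insert.1 hp' with rfl | hp''
          · exact hb'gt.le
          · exact (Finset.mem_filter.1 hp'').2.1.le
      have hpb' : p < b' := hx.1.trans hx.2
      have hd1 : dist (f x) (f b₀) < ε/2 := by
        apply hδ (mem_Ici.2 (hpb.trans hx.1.le))
        rw [Real.dist_eq, abs_of_nonneg (by linarith [hx.1, hpb] : 0 ≤ x - b₀)]
        linarith [hx.2]
      have hd2 : dist (f p) (f b₀) < ε/2 := by
        apply hδ (mem_Ici.2 hpb)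
        rw [Real.dist_eq, abs_of_nonneg (by linarith : 0 ≤ p - b₀)]
        linarith
      calc ‖f x - f p‖ = dist (f x) (f p) := (dist_eq_norm _ _).symm
        _ ≤ dist (f x) (f b₀) + dist (f b₀) (f p) := dist_triangle _ _ _
        _ ≤ ε/2 + ε/2 := by
            rw [dist_comm (f b₀) (f p)]
            exact add_le_add hd1.le hd2.le
        _ = ε := by ring
    have hb'S : b' ∈ S :=
      ⟨⟨hb00.trans hb'gt.le, hb'T⟩, _, good_extend f hgood hb'gt hosc⟩
    exact absurd (le_csSup hbdd hb'S) (not_le.2 hb'gt)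

end PartitionExists

section Bridge

omit hT hBV hext in
lemma exists_sorted_enum (P : Finset ℝ) (h0P : (0:ℝ) ∈ P) (hTP : T ∈ P)
    (hPsub : ↑P ⊆ Icc (0:ℝ) T) :
    ∃ (m : ℕ) (q : ℕ → ℝ), q 0 = 0 ∧ q m = T ∧ (∀ i < m, q i < q (i+1)) ∧
      (∀ i ≤ m, q i ∈ P) ∧ (∀ p ∈ P, ∃ i ≤ m, q i = p) ∧
      (∀ i < m, nxt P (q i) = q (i+1)) ∧ (∀ i, m ≤ i → q i = T) := by
  classical
  set l := P.sort (· ≤ ·) with hl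
  have hsort : l.Pairwise (· < ·) := P.sortedLT_sort.pairwise
  have hmem_l : ∀ a : ℝ, a ∈ l ↔ a ∈ P := fun a => Finset.mem_sort _
  have hpos : 0 < l.length := by
    rw [Finset.length_sort]
    exact Finset.card_pos.2 ⟨0, h0P⟩
  set m := l.length - 1 with hm
  have hmlen : m + 1 = l.length := Nat.succ_pred_eq_of_pos hpos
  set q : ℕ → ℝ := fun i => if h : i < l.length then l.get ⟨i, h⟩ else T with hq
  have hsm : StrictMono l.get := hsort.sortedLT
  have hqlt : ∀ i (h : i < l.length), q i = l.get ⟨i, h⟩ := fun i h => dif_pos h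
  have hmemP : ∀ i (h : i < l.length), q i ∈ P := by
    intro i h
    rw [hqlt i h, ← hmem_l]
    exact List.get_mem l ⟨i, h⟩
  have hsurj : ∀ p ∈ P, ∃ i ≤ m, q i = p := by
    intro p hp
    rw [← hmem_l] at hp
    obtain ⟨j, hj⟩ := List.mem_iff_get.1 hp
    have hjl : j.val < l.length := j.isLt
    refine ⟨j.val, by omega, ?_⟩
    rw [hqlt j.val hjl, Fin.eta, hj]
  have hq0 : q 0 = 0 := by
    rw [hqlt 0 hpos]
    obtain ⟨j, hj⟩ := List.mem_iff_get.1 ((hmem_l 0).2 h0P)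
    apply le_antisymm
    · calc l.get ⟨0, hpos⟩ ≤ l.get j := hsm.monotone (by exact Fin.mk_le_of_le_val (Nat.zero_le _))
      _ = 0 := hj
    · exact (hPsub ((hmem_l _).1 (List.get_mem l ⟨0, hpos⟩))).1
  have hqm : q m = T := by
    have hmlt : m < l.length := by omega
    rw [hqlt m hmlt]
    obtain ⟨j, hj⟩ := List.mem_iff_get.1 ((hmem_l T).2 hTP)
    apply le_antisymm
    · exact (hPsub ((hmem_l _).1 (List.get_mem l ⟨m, hmlt⟩))).2
    · calc T = l.get j := hj.symm
      _ ≤ l.get ⟨m, hmlt⟩ := hsm.monotone (by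
          rw [Fin.le_def]
          have := j.isLt
          simp only []
          omega)
  have hmono : ∀ i < m, q i < q (i+1) := by
    intro i hi
    have h1 : i < l.length := by omega
    have h2 : i + 1 < l.length := by omega
    rw [hqlt i h1, hqlt (i+1) h2]
    exact hsm (by exact Fin.mk_lt_mk.2 (Nat.lt_succ_self i))
  refine ⟨m, q, hq0, hqm, hmono, fun i hi => hmemP i (by omega), hsurj, ?_, ?_⟩
  · intro i hi
    have h1 : i < l.length := by omega
    have h2 : i + 1 < l.length := by omega
    apply nxt_eq_of (hmemP (i+1) h2) (hmono i hi)
    intro p hp hip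
    obtain ⟨j, hjm, hjp⟩ := hsurj p hp
    have hjl : j < l.length := by omega
    rw [← hjp]
    rw [← hjp, hqlt i h1, hqlt j hjl] at hip
    have hij : i < j := by
      have := hsm.lt_iff_lt (a := (⟨i, h1⟩ : Fin l.length)) (b := ⟨j, hjl⟩) |>.1 hip
      exact this
    rw [hqlt (i+1) h2, hqlt j hjl]
    exact hsm.monotone (Fin.mk_le_mk.2 (by omega))
  · intro i hi
    rcases eq_or_lt_of_le hi with rfl | hlt
    · exact hqm
    · show (if h : i < l.length then l.get ⟨i, h⟩ else T) = T
      rw [dif_neg (by omega : ¬ i < l.length)]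

omit hT hBV hext in
lemma q_mono_all {m : ℕ} {q : ℕ → ℝ} (hqm : q m = T)
    (hmono : ∀ i < m, q i < q (i+1)) (hmem : ∀ i ≤ m, q i ∈ Icc (0:ℝ) T)
    (hqtop : ∀ i, m ≤ i → q i = T) : ∀ i j, i ≤ j → q i ≤ q j := by
  have hstep : ∀ i, q i ≤ q (i + 1) := by
    intro i
    rcases lt_or_ge i m with h | h
    · exact (hmono i h).le
    · rw [hqtop i h, hqtop (i+1) (by omega)]
  intro i j hij
  induction j, hij using Nat.le_induction with
  | base => exact le_rfl
  | succ k hk ih => exact ih.trans (hstep k)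

omit hT hBV hext in
lemma Icc_eq_pieces {m : ℕ} {q : ℕ → ℝ} (hq0 : q 0 = 0) (hqm : q m = T)
    (hmono : ∀ i < m, q i < q (i+1)) (hmem : ∀ i ≤ m, q i ∈ Icc (0:ℝ) T)
    (hqtop : ∀ i, m ≤ i → q i = T) :
    Icc (0:ℝ) T = ⋃ i ∈ Finset.range (m+1), ({q i} ∪ Ioo (q i) (q (i+1))) := by
  ext x
  simp only [mem_iUnion, Finset.mem_range, exists_prop, mem_union, mem_singleton_iff, mem_Ioo]
  constructor
  · intro hx
    classical
    obtain ⟨i, him, hspec, hgreat⟩ : ∃ i, i ≤ m ∧ q i ≤ x ∧ ∀ k ≤ m, i < k → ¬ q k ≤ x := by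
      refine ⟨Nat.findGreatest (fun i => q i ≤ x) m, Nat.findGreatest_le m, ?_, ?_⟩
      · exact Nat.findGreatest_spec (P := fun i => q i ≤ x) (Nat.zero_le m)
          (show (fun i => q i ≤ x) 0 from by simp only []; rw [hq0]; exact hx.1)
      · intro k hk hik
        exact Nat.findGreatest_is_greatest hik hk
    rcases eq_or_lt_of_le hspec with heq | hlt
    · exact ⟨i, by omega, Or.inl heq.symm⟩
    · rcases eq_or_lt_of_le him with rfl | hilt
      · exfalso
        rw [hqm] at hlt
        exact absurd hx.2 (not_le.2 hlt)
      · refine ⟨i, by omega, Or.inr ⟨hlt, ?_⟩⟩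
        by_contra hc
        push_neg at hc
        exact hgreat (i+1) (by omega) (Nat.lt_succ_self i) hc
  · rintro ⟨i, hi, hx | hx⟩
    · rw [hx]; exact hmem i (by omega)
    · have h1 : 0 ≤ q i := (hmem i (by omega)).1
      have h2 : q (i+1) ≤ T := by
        rcases le_or_gt (i+1) m with h | h
        · exact (hmem (i+1) h).2
        · rw [hqtop (i+1) (by omega)]
      exact ⟨h1.trans hx.1.le, hx.2.le.trans h2⟩

omit hT hBV hext in
lemma pieces_disjoint {m : ℕ} {q : ℕ → ℝ} (hqm : q m = T)
    (hmono : ∀ i < m, q i < q (i+1)) (hmem : ∀ i ≤ m, q i ∈ Icc (0:ℝ) T)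
    (hqtop : ∀ i, m ≤ i → q i = T) :
    Set.Pairwise ↑(Finset.range (m+1))
      (Function.onFun Disjoint (fun i => ({q i} ∪ Ioo (q i) (q (i+1))))) := by
  have hqmono := q_mono_all hqm hmono hmem hqtop
  have key : ∀ i j, i < j → j ≤ m →
      Disjoint ({q i} ∪ Ioo (q i) (q (i+1))) ({q j} ∪ Ioo (q j) (q (j+1))) := by
    intro i j hij hjm
    have h1 : ({q i} ∪ Ioo (q i) (q (i+1))) ⊆ Ico (q i) (q (i+1)) := by
      intro x hx
      rcases hx with hx | hx
      · rw [mem_singleton_iff] at hx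
        rw [hx]
        exact ⟨le_rfl, hmono i (by omega)⟩
      · exact ⟨hx.1.le, hx.2⟩
    have h2 : ({q j} ∪ Ioo (q j) (q (j+1))) ⊆ Ici (q j) := by
      intro x hx
      rcases hx with hx | hx
      · rw [mem_singleton_iff] at hx; rw [hx]; exact mem_Ici.2 le_rfl
      · exact hx.1.le
    have h3 : q (i+1) ≤ q j := hqmono (i+1) j (by omega)
    refine Set.disjoint_of_subset h1 h2 ?_
    rw [Set.disjoint_left]
    intro x hx1 hx2
    exact absurd (lt_of_lt_of_le hx1.2 h3) (not_lt.2 (mem_Ici.1 hx2))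
  intro i hi j hj hij
  simp only [Finset.coe_range, mem_Iio] at hi hj
  rcases lt_or_gt_of_ne hij with h | h
  · exact key i j h (by omega)
  · exact (key j i h (by omega)).symm

end Bridge

section StepFn

omit hT hBV hext in
lemma partPt_eq_of {P : Finset ℝ} {p x : ℝ} (hp : p ∈ P) (hpx : p ≤ x)
    (hmax : ∀ r ∈ P, r ≤ x → r ≤ p) : partPt P x = p := by
  have hne : (P.filter (fun r => r ≤ x)).Nonempty := ⟨p, Finset.mem_filter.2 ⟨hp, hpx⟩⟩
  rw [partPt, dif_pos hne]
  apply le_antisymm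
  · have hm := Finset.max'_mem _ hne
    rw [Finset.mem_filter] at hm
    exact hmax _ hm.1 hm.2
  · exact Finset.le_max' (P.filter (fun r => r ≤ x)) p (Finset.mem_filter.2 ⟨hp, hpx⟩)

omit hT hBV hext in
lemma partPt_neg {P : Finset ℝ} {x : ℝ} (hPsub : ↑P ⊆ Icc (0:ℝ) T) (hx : x < 0) :
    partPt P x = 0 := by
  have : ¬ (P.filter (fun p => p ≤ x)).Nonempty := by
    rintro ⟨p, hp⟩
    rw [Finset.mem_filter] at hp
    exact absurd (hp.2.trans_lt hx) (not_lt.2 (hPsub hp.1).1)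
  rw [partPt, dif_neg this]

omit hT hBV hext in
lemma partPt_ge_T {P : Finset ℝ} {x : ℝ} (hTP : T ∈ P) (hPsub : ↑P ⊆ Icc (0:ℝ) T)
    (hx : T ≤ x) : partPt P x = T :=
  partPt_eq_of hTP hx (fun r hr _ => (hPsub hr).2)

omit hT hBV hext in
lemma partPt_Ioo {P : Finset ℝ} {p x : ℝ} (hp : p ∈ P)
    (hx : p < x) (hxn : x < nxt P p) : partPt P x = p := by
  apply partPt_eq_of hp hx.le
  intro r hr hrx
  by_contra hc
  push_neg at hc
  exact absurd ((nxt_le hr hc).trans hrx) (not_le.2 hxn)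

omit hT hBV hext in
lemma stepApprox_stronglyMeasurable {P : Finset ℝ} (hT : 0 < T) (h0P : (0:ℝ) ∈ P)
    (hTP : T ∈ P) (hPsub : ↑P ⊆ Icc (0:ℝ) T) :
    StronglyMeasurable (fun x => f (partPt P x)) := by
  obtain ⟨m, q, hq0, hqm, hmono, hmemP, hsurj, hnxt, hqtop⟩ :=
    exists_sorted_enum P h0P hTP hPsub
  have hmem : ∀ i ≤ m, q i ∈ Icc (0:ℝ) T := fun i hi => hPsub (hmemP i hi)
  have heq : (fun x => f (partPt P x)) =
      fun x => ((Iio (0:ℝ)).indicator (fun _ => f 0) x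
        + ∑ i ∈ Finset.range (m+1),
            (({q i} ∪ Ioo (q i) (q (i+1))).indicator (fun _ => f (q i)) x))
        + (Ioi T).indicator (fun _ => f T) x := by
    funext x
    rcases lt_or_ge x 0 with hx | hx
    · rw [partPt_neg hPsub hx]
      have h1 : (Iio (0:ℝ)).indicator (fun _ => f 0) x = f 0 := indicator_of_mem hx _
      have h2 : ∀ i ∈ Finset.range (m+1),
          ({q i} ∪ Ioo (q i) (q (i+1))).indicator (fun _ => f (q i)) x = 0 := by
        intro i hi
        apply indicator_of_notMem
        rintro (h | h)
        · rw [mem_singleton_iff] at h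
          exact absurd ((hmem i (by have := Finset.mem_range.1 hi; omega)).1) (by rw [h] at hx; exact not_le.2 hx)
        · exact absurd ((hmem i (by have := Finset.mem_range.1 hi; omega)).1.trans h.1.le) (not_le.2 hx)
      rw [h1, Finset.sum_congr rfl h2, Finset.sum_const, smul_zero,
        indicator_of_notMem (by simp only [mem_Ioi]; linarith) _]
      abel
    rcases le_or_gt x T with hxT | hxT
    · -- x ∈ Icc 0 T
      have hxmem : x ∈ Icc (0:ℝ) T := ⟨hx, hxT⟩
      rw [Icc_eq_pieces hq0 hqm hmono hmem hqtop] at hxmem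
      simp only [mem_iUnion, exists_prop] at hxmem
      obtain ⟨i, hi, hxi⟩ := hxmem
      have hpart : partPt P x = q i := by
        rcases hxi with h | h
        · rw [mem_singleton_iff] at h
          rw [h]
          exact partPt_self h0P (hmemP i (by have := Finset.mem_range.1 hi; omega)) (hmem i (by have := Finset.mem_range.1 hi; omega)).1
        · rcases Nat.lt_or_ge i m with him | him
          · rw [← hnxt i him] at h
            exact partPt_Ioo (hmemP i (by omega)) h.1 h.2
          · exfalso
            have : q (i+1) = T := hqtop (i+1) (by omega)
            have : q i = T := hqtop i him
            rw [‹q (i+1) = T›, ‹q i = T›] at h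
            exact absurd h.2 (not_lt.2 h.1.le)
      rw [hpart]
      have hdisj := pieces_disjoint hqm hmono hmem hqtop
      have hsum : ∑ j ∈ Finset.range (m+1),
          (({q j} ∪ Ioo (q j) (q (j+1))).indicator (fun _ => f (q j)) x) = f (q i) := by
        rw [Finset.sum_eq_single i]
        · exact indicator_of_mem hxi _
        · intro j hj hji
          apply indicator_of_notMem
          intro hxj
          have := hdisj (Finset.mem_coe.2 hj) (Finset.mem_coe.2 hi) hji
          exact absurd hxi (Set.disjoint_left.1 this hxj)
        · intro hi'
          exact absurd hi hi'
      rw [hsum, indicator_of_notMem (by simp only [mem_Iio]; linarith) _,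
        indicator_of_notMem (by simp only [mem_Ioi]; linarith) _]
      abel
    · -- T < x
      rw [partPt_ge_T hTP hPsub hxT.le]
      have h2 : ∀ i ∈ Finset.range (m+1),
          ({q i} ∪ Ioo (q i) (q (i+1))).indicator (fun _ => f (q i)) x = 0 := by
        intro i hi
        apply indicator_of_notMem
        rintro (h | h)
        · rw [mem_singleton_iff] at h
          exact absurd ((hmem i (by have := Finset.mem_range.1 hi; omega)).2) (by rw [h] at hxT; exact not_le.2 hxT)
        · have hle : q (i+1) ≤ T := by
            rcases le_or_gt (i+1) m with hh | hh
            · exact (hmem (i+1) hh).2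
            · rw [hqtop (i+1) (by omega)]
          exact absurd (h.2.trans_le hle) (not_lt.2 hxT.le)
      rw [Finset.sum_congr rfl h2, Finset.sum_const, smul_zero,
        indicator_of_notMem (by simp only [mem_Iio]; linarith) _,
        indicator_of_mem (mem_Ioi.2 hxT) _]
      abel
  rw [heq]
  apply StronglyMeasurable.add
  apply StronglyMeasurable.add
  · exact stronglyMeasurable_const.indicator measurableSet_Iio
  · apply Finset.stronglyMeasurable_fun_sum
    intro i _
    exact stronglyMeasurable_const.indicator
      ((measurableSet_singleton _).union measurableSet_Ioo)
  · exact stronglyMeasurable_const.indicator measurableSet_Ioi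

omit hT hBV hext in
lemma stepApprox_close {P : Finset ℝ} {ε : ℝ} (h0P : (0:ℝ) ∈ P) (hTP : T ∈ P)
    (hosc : ∀ p ∈ P, ∀ x ∈ Ioo p (nxt P p), ‖f x - f p‖ ≤ ε) {x : ℝ}
    (hx : x ∈ Icc (0:ℝ) T) : ‖f x - f (partPt P x)‖ ≤ ε ∨ x = partPt P x := by
  rcases partPt_cases h0P hTP hx with h | h
  · exact Or.inr h
  · obtain ⟨hp, _, _⟩ := partPt_spec h0P hx.1
    exact Or.inl (hosc _ hp x ⟨h.1, h.2⟩)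

end StepFn

section Meas

include hT hBV hext in
lemma bv_stronglyMeasurable (hrc : ∀ t ∈ Ico (0:ℝ) T, ContinuousWithinAt f (Ici t) t) :
    StronglyMeasurable f := by
  have hex : ∀ k : ℕ, ∃ P : Finset ℝ, ((0:ℝ) ∈ P ∧ T ∈ P ∧ ↑P ⊆ Icc (0:ℝ) T) ∧
      ∀ p ∈ P, ∀ x ∈ Ioo p (nxt P p), ‖f x - f p‖ ≤ 1/(k+1) := by
    intro k
    obtain ⟨P, h1, h2, h3, -, h5⟩ := exists_good_partition f hT hBV hext hrc ∅ (by simp)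
      (by positivity : (0:ℝ) < 1/(k+1))
    exact ⟨P, ⟨h1, h2, h3⟩, h5⟩
  choose Ps hPs hosc using hex
  refine stronglyMeasurable_of_tendsto (u := atTop)
    (f := fun k x => f (partPt (Ps k) x)) (fun k =>
      stepApprox_stronglyMeasurable f hT (hPs k).1 (hPs k).2.1 (hPs k).2.2) ?_
  rw [tendsto_pi_nhds]
  intro x
  rcases lt_or_ge x 0 with hx | hx
  · have hpt : ∀ k : ℕ, f (partPt (Ps k) x) = f 0 := fun k => by
      rw [partPt_neg (hPs k).2.2 hx]
    rw [show f x = f 0 from (hext x).1 hx.le]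
    simp only [hpt]
    exact tendsto_const_nhds
  rcases le_or_gt x T with hxT | hxT
  · rw [tendsto_iff_norm_sub_tendsto_zero]
    apply squeeze_zero (fun k => norm_nonneg _) (g := fun k : ℕ => 1/(k+1))
    · intro k
      rcases stepApprox_close f (hPs k).1 (hPs k).2.1 (hosc k) ⟨hx, hxT⟩ with hcl | heq
      · calc ‖f (partPt (Ps k) x) - f x‖ = ‖f x - f (partPt (Ps k) x)‖ := norm_sub_rev _ _
        _ ≤ 1/(k+1) := hcl
      · rw [← heq, sub_self, norm_zero]
        positivity
    · exact tendsto_one_div_add_atTop_nhds_zero_nat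
  · have hpt : ∀ k : ℕ, f (partPt (Ps k) x) = f T := fun k => by
      rw [partPt_ge_T (hPs k).2.1 (hPs k).2.2 hxT.le]
    rw [show f x = f T from (hext x).2 hxT.le]
    simp only [hpt]
    exact tendsto_const_nhds

omit hT hext in
lemma bv_norm_bound {x : ℝ} (hx : x ∈ Icc (0:ℝ) T) :
    ‖f x‖ ≤ ‖f 0‖ + (eVariationOn f (Icc 0 T)).toReal := by
  have h0 : (0:ℝ) ∈ Icc (0:ℝ) T := ⟨le_rfl, hx.1.trans hx.2⟩
  have h1 : edist (f x) (f 0) ≤ eVariationOn f (Icc 0 T) := eVariationOn.edist_le f hx h0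
  have h2 := ENNReal.toReal_mono hBV h1
  rw [← dist_edist] at h2
  rw [dist_eq_norm] at h2
  calc ‖f x‖ = ‖f 0 + (f x - f 0)‖ := by congr 1; abel
  _ ≤ ‖f 0‖ + ‖f x - f 0‖ := norm_add_le _ _
  _ ≤ ‖f 0‖ + (eVariationOn f (Icc 0 T)).toReal := by linarith

end Meas

section Key

variable (μ : Measure ℝ) (v : ℝ → H) [IsFiniteMeasure μ] (hv : Integrable v μ)
  (hD : ∀ c d : ℝ, c < d → (∫ s in Ioc c d, v s ∂μ) = rightLim f d - rightLim f c)

include hT hBV hext hv hD in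
lemma key_step_bound (ψ : ℝ → H) (hψm : AEStronglyMeasurable ψ (μ.restrict (Icc 0 T)))
    {c : ℝ} (hψc : ∀ x ∈ Icc (0:ℝ) T, ‖ψ x‖ ≤ c)
    (P : Finset ℝ) (h0P : (0:ℝ) ∈ P) (hTP : T ∈ P) (hPsub : ↑P ⊆ Icc (0:ℝ) T)
    (hconst : ∀ p ∈ P, ∀ x ∈ Ioo p (nxt P p), ∀ y ∈ Ioo p (nxt P p), ψ x = ψ y) :
    |∫ x in Icc (0:ℝ) T, (inner ℝ (ψ x) (v x) : ℝ) ∂μ|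
      ≤ c * (eVariationOn f (Icc 0 T)).toReal := by
  have hc0 : 0 ≤ c := (norm_nonneg _).trans (hψc 0 ⟨le_rfl, hT.le⟩)
  obtain ⟨m, q, hq0, hqm, hmono, hmemP, hsurj, hnxt, hqtop⟩ :=
    exists_sorted_enum P h0P hTP hPsub
  have hmem : ∀ i ≤ m, q i ∈ Icc (0:ℝ) T := fun i hi => hPsub (hmemP i hi)
  set F : ℝ → ℝ := fun x => (inner ℝ (ψ x) (v x) : ℝ) with hF
  -- integrability of F on [0,T]
  have hFi : IntegrableOn F (Icc 0 T) μ := by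
    apply Integrable.mono' ((hv.norm.const_mul c).restrict (s := Icc 0 T))
    · exact hψm.inner hv.aestronglyMeasurable.restrict
    · filter_upwards [ae_restrict_mem measurableSet_Icc] with x hx
      calc ‖F x‖ ≤ ‖ψ x‖ * ‖v x‖ := by
            rw [hF]
            exact abs_real_inner_le_norm _ _
      _ ≤ c * ‖v x‖ := mul_le_mul_of_nonneg_right (hψc x hx) (norm_nonneg _)
  -- piece subsets
  have hRsub : ∀ i, i ≤ m → ({q i} ∪ Ioo (q i) (q (i+1))) ⊆ Icc (0:ℝ) T := by
    intro i hi x hx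
    rcases hx with hx | hx
    · rw [mem_singleton_iff] at hx; rw [hx]; exact hmem i hi
    · have h2 : q (i+1) ≤ T := by
        rcases le_or_gt (i+1) m with h | h
        · exact (hmem (i+1) h).2
        · rw [hqtop (i+1) (by omega)]
      exact ⟨(hmem i hi).1.trans hx.1.le, hx.2.le.trans h2⟩
  -- decompose the integral
  have hsplit : ∫ x in Icc (0:ℝ) T, F x ∂μ
      = ∑ i ∈ Finset.range (m+1), ∫ x in ({q i} ∪ Ioo (q i) (q (i+1))), F x ∂μ := by
    rw [Icc_eq_pieces hq0 hqm hmono hmem hqtop]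
    apply integral_biUnion_finset
    · intro i _
      exact (measurableSet_singleton _).union measurableSet_Ioo
    · exact pieces_disjoint hqm hmono hmem hqtop
    · intro i hi
      exact hFi.mono_set (hRsub i (by have := Finset.mem_range.1 hi; omega))
  -- value on each piece
  have hval : ∀ i ∈ Finset.range (m+1),
      ∫ x in ({q i} ∪ Ioo (q i) (q (i+1))), F x ∂μ
        = (inner ℝ (ψ (q i)) (∫ x in {q i}, v x ∂μ) : ℝ)
          + (if i < m then
              (inner ℝ (ψ ((q i + q (i+1))/2)) (∫ x in Ioo (q i) (q (i+1)), v x ∂μ) : ℝ)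
            else 0) := by
    intro i hi
    have him : i ≤ m := by have := Finset.mem_range.1 hi; omega
    have hdisj : Disjoint ({q i} : Set ℝ) (Ioo (q i) (q (i+1))) := by
      simp only [disjoint_singleton_left, mem_Ioo]
      intro h
      exact absurd h.1 (lt_irrefl _)
    have hIs : IntegrableOn F {q i} μ :=
      hFi.mono_set (fun x hx => by
        rw [mem_singleton_iff] at hx; rw [hx]; exact hmem i him)
    have hIo : IntegrableOn F (Ioo (q i) (q (i+1))) μ :=
      hFi.mono_set (fun x hx => hRsub i him (Or.inr hx))
    rw [setIntegral_union hdisj measurableSet_Ioo hIs hIo]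
    congr 1
    · -- singleton
      rw [integral_singleton, integral_singleton]
      simp only [hF, real_inner_smul_right, smul_eq_mul]
    · rcases lt_or_ge i m with hilt | hige
      · rw [if_pos hilt]
        set x₀ := (q i + q (i+1))/2 with hx₀
        have hx₀mem : x₀ ∈ Ioo (q i) (q (i+1)) := by
          constructor
          · rw [hx₀]; linarith [hmono i hilt]
          · rw [hx₀]; linarith [hmono i hilt]
        have hcongr : EqOn F (fun x => (inner ℝ (ψ x₀) (v x) : ℝ)) (Ioo (q i) (q (i+1))) := by
          intro x hx
          rw [hF]
          simp only []
          congr 1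
          apply hconst (q i) (hmemP i him) x ?_ x₀ ?_
          · rw [hnxt i hilt]; exact hx
          · rw [hnxt i hilt]; exact hx₀mem
        rw [setIntegral_congr_fun measurableSet_Ioo hcongr]
        exact integral_inner hv.integrableOn _
      · rw [if_neg (by omega)]
        have : Ioo (q i) (q (i+1)) = ∅ := by
          rw [hqtop i hige, hqtop (i+1) (by omega)]
          exact Ioo_self T
        rw [this]
        simp
  -- norm bound for each piece value
  have hnorm : ∀ i ∈ Finset.range (m+1),
      |(inner ℝ (ψ (q i)) (∫ x in {q i}, v x ∂μ) : ℝ)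
          + (if i < m then
              (inner ℝ (ψ ((q i + q (i+1))/2)) (∫ x in Ioo (q i) (q (i+1)), v x ∂μ) : ℝ)
            else 0)|
        ≤ c * ‖∫ x in {q i}, v x ∂μ‖
          + (if i < m then c * ‖∫ x in Ioo (q i) (q (i+1)), v x ∂μ‖ else 0) := by
    intro i hi
    have him : i ≤ m := by have := Finset.mem_range.1 hi; omega
    have h1 : |(inner ℝ (ψ (q i)) (∫ x in {q i}, v x ∂μ) : ℝ)|
        ≤ c * ‖∫ x in {q i}, v x ∂μ‖ := by
      calc |(inner ℝ (ψ (q i)) (∫ x in {q i}, v x ∂μ) : ℝ)|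
          ≤ ‖ψ (q i)‖ * ‖∫ x in {q i}, v x ∂μ‖ := abs_real_inner_le_norm _ _
      _ ≤ c * ‖∫ x in {q i}, v x ∂μ‖ :=
          mul_le_mul_of_nonneg_right (hψc _ (hmem i him)) (norm_nonneg _)
    rcases lt_or_ge i m with hilt | hige
    · rw [if_pos hilt, if_pos hilt]
      have hx₀mem : (q i + q (i+1))/2 ∈ Ioo (q i) (q (i+1)) :=
        ⟨by linarith [hmono i hilt], by linarith [hmono i hilt]⟩
      have h2 : |(inner ℝ (ψ ((q i + q (i+1))/2)) (∫ x in Ioo (q i) (q (i+1)), v x ∂μ) : ℝ)|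
          ≤ c * ‖∫ x in Ioo (q i) (q (i+1)), v x ∂μ‖ := by
        calc _ ≤ ‖ψ ((q i + q (i+1))/2)‖ * ‖∫ x in Ioo (q i) (q (i+1)), v x ∂μ‖ :=
            abs_real_inner_le_norm _ _
        _ ≤ _ := mul_le_mul_of_nonneg_right
            (hψc _ (hRsub i him (Or.inr hx₀mem))) (norm_nonneg _)
      calc |_ + _| ≤ _ := abs_add_le _ _
      _ ≤ _ := add_le_add h1 h2
    · rw [if_neg (by omega), if_neg (by omega)]
      simpa using h1
  -- the variation sums
  have hsing : ∀ i, i ≤ m → ∫ x in {q i}, v x ∂μ = rightLim f (q i) - leftLim f (q i) :=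
    fun i hi => nu_singleton f hT hBV hext μ v hv hD (hmem i hi)
  have hIoo : ∀ i, i < m →
      ∫ x in Ioo (q i) (q (i+1)), v x ∂μ = leftLim f (q (i+1)) - rightLim f (q i) :=
    fun i hi => nu_Ioo f hT hBV hext μ v hv hD (hmem i hi.le).1 (hmono i hi)
      (hmem (i+1) hi).2
  -- assemble
  rw [hsplit, Finset.sum_congr rfl hval]
  calc |∑ i ∈ Finset.range (m+1), _| ≤ ∑ i ∈ Finset.range (m+1), _ :=
    Finset.abs_sum_le_sum_abs _ _
  _ ≤ ∑ i ∈ Finset.range (m+1),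
      (c * ‖∫ x in {q i}, v x ∂μ‖
        + (if i < m then c * ‖∫ x in Ioo (q i) (q (i+1)), v x ∂μ‖ else 0)) :=
    Finset.sum_le_sum hnorm
  _ = c * ((∑ i ∈ Finset.range (m+1), ‖rightLim f (q i) - leftLim f (q i)‖)
        + ∑ i ∈ Finset.range m, ‖leftLim f (q (i+1)) - rightLim f (q i)‖) := by
      rw [Finset.sum_add_distrib, mul_add, Finset.mul_sum, Finset.mul_sum]
      congr 1
      · apply Finset.sum_congr rfl
        intro i hi
        rw [hsing i (by have := Finset.mem_range.1 hi; omega)]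
      · rw [Finset.sum_range_succ, if_neg (lt_irrefl m), add_zero]
        apply Finset.sum_congr rfl
        intro i hi
        have hilt : i < m := Finset.mem_range.1 hi
        rw [if_pos hilt, hIoo i hilt]
  _ ≤ c * (eVariationOn f (Icc 0 T)).toReal := by
      apply mul_le_mul_of_nonneg_left _ hc0
      have hcb := chain_bound f hT hBV hext m q hq0 hmono (fun i hi => hmem i hi)
      have hrT : rightLim f (q m) = f (q m) := by
        rw [hqm]; exact rightLim_of_T_le f hext le_rfl
      rw [hrT, sub_self, norm_zero, add_zero, hqm] at hcb
      calc _ ≤ (eVariationOn f (Icc 0 T ∩ Icc 0 T)).toReal := hcb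
      _ = (eVariationOn f (Icc 0 T)).toReal := by rw [Set.inter_self]

end Key

section Repr

variable (μ : Measure ℝ) (v : ℝ → H) [IsFiniteMeasure μ] (hv : Integrable v μ)
  (hD : ∀ c d : ℝ, c < d → (∫ s in Ioc c d, v s ∂μ) = rightLim f d - rightLim f c)

include hT hBV hext hv hD in
lemma step_integral_repr (ψ : ℝ → H) (hψm : AEStronglyMeasurable ψ (μ.restrict (Icc 0 T)))
    {c : ℝ} (hψc : ∀ x ∈ Icc (0:ℝ) T, ‖ψ x‖ ≤ c)
    {m : ℕ} {q : ℕ → ℝ} (hq0 : q 0 = 0) (hqm : q m = T)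
    (hmono : ∀ i < m, q i < q (i+1)) (hmem : ∀ i ≤ m, q i ∈ Icc (0:ℝ) T)
    (hqtop : ∀ i, m ≤ i → q i = T)
    (hconst : ∀ i < m, ∀ x ∈ Ioo (q i) (q (i+1)), ψ x = ψ ((q i + q (i+1))/2)) :
    ∫ x in Icc (0:ℝ) T, (inner ℝ (ψ x) (v x) : ℝ) ∂μ
      = ∑ i ∈ Finset.range (m+1),
          ((inner ℝ (ψ (q i)) (rightLim f (q i) - leftLim f (q i)) : ℝ)
            + (if i < m then
                (inner ℝ (ψ ((q i + q (i+1))/2)) (leftLim f (q (i+1)) - rightLim f (q i)) : ℝ)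
              else 0)) := by
  set F : ℝ → ℝ := fun x => (inner ℝ (ψ x) (v x) : ℝ) with hF
  have hFi : IntegrableOn F (Icc 0 T) μ := by
    apply Integrable.mono' ((hv.norm.const_mul c).restrict (s := Icc 0 T))
    · exact hψm.inner hv.aestronglyMeasurable.restrict
    · filter_upwards [ae_restrict_mem measurableSet_Icc] with x hx
      calc ‖F x‖ ≤ ‖ψ x‖ * ‖v x‖ := by
            rw [hF]; exact abs_real_inner_le_norm _ _
      _ ≤ c * ‖v x‖ := mul_le_mul_of_nonneg_right (hψc x hx) (norm_nonneg _)
  have hRsub : ∀ i, i ≤ m → ({q i} ∪ Ioo (q i) (q (i+1))) ⊆ Icc (0:ℝ) T := by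
    intro i hi x hx
    rcases hx with hx | hx
    · rw [mem_singleton_iff] at hx; rw [hx]; exact hmem i hi
    · have h2 : q (i+1) ≤ T := by
        rcases le_or_gt (i+1) m with h | h
        · exact (hmem (i+1) h).2
        · rw [hqtop (i+1) (by omega)]
      exact ⟨(hmem i hi).1.trans hx.1.le, hx.2.le.trans h2⟩
  have hsplit : ∫ x in Icc (0:ℝ) T, F x ∂μ
      = ∑ i ∈ Finset.range (m+1), ∫ x in ({q i} ∪ Ioo (q i) (q (i+1))), F x ∂μ := by
    rw [Icc_eq_pieces hq0 hqm hmono hmem hqtop]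
    apply integral_biUnion_finset
    · intro i _
      exact (measurableSet_singleton _).union measurableSet_Ioo
    · exact pieces_disjoint hqm hmono hmem hqtop
    · intro i hi
      exact hFi.mono_set (hRsub i (by have := Finset.mem_range.1 hi; omega))
  rw [hsplit]
  apply Finset.sum_congr rfl
  intro i hi
  have him : i ≤ m := by have := Finset.mem_range.1 hi; omega
  have hdisj : Disjoint ({q i} : Set ℝ) (Ioo (q i) (q (i+1))) := by
    simp only [disjoint_singleton_left, mem_Ioo]
    intro h
    exact absurd h.1 (lt_irrefl _)
  have hIs : IntegrableOn F {q i} μ :=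
    hFi.mono_set (fun x hx => by
      rw [mem_singleton_iff] at hx; rw [hx]; exact hmem i him)
  have hIo : IntegrableOn F (Ioo (q i) (q (i+1))) μ :=
    hFi.mono_set (fun x hx => hRsub i him (Or.inr hx))
  rw [setIntegral_union hdisj measurableSet_Ioo hIs hIo]
  congr 1
  · -- singleton
    rw [← nu_singleton f hT hBV hext μ v hv hD (hmem i him)]
    rw [integral_singleton, integral_singleton]
    simp only [hF, real_inner_smul_right, smul_eq_mul]
  · rcases lt_or_ge i m with hilt | hige
    · rw [if_pos hilt]
      rw [← nu_Ioo f hT hBV hext μ v hv hD (hmem i him).1 (hmono i hilt) (hmem (i+1) hilt).2]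
      have hcongr : EqOn F (fun x => (inner ℝ (ψ ((q i + q (i+1))/2)) (v x) : ℝ))
          (Ioo (q i) (q (i+1))) := by
        intro x hx
        rw [hF]
        simp only []
        rw [hconst i hilt x hx]
      rw [setIntegral_congr_fun measurableSet_Ioo hcongr]
      exact integral_inner hv.integrableOn _
    · rw [if_neg (by omega)]
      have : Ioo (q i) (q (i+1)) = ∅ := by
        rw [hqtop i hige, hqtop (i+1) (by omega)]
        exact Ioo_self T
      rw [this]
      simp

include hT hBV hext hv hD in
lemma error_bound (hfun : ℝ → H) (hfBV : BoundedVariationOn hfun (Icc 0 T))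
    (hfext : ∀ t : ℝ, (t ≤ 0 → hfun t = hfun 0) ∧ (T ≤ t → hfun t = hfun T))
    (hfrc : ∀ t ∈ Ico (0:ℝ) T, ContinuousWithinAt hfun (Ici t) t)
    (P : Finset ℝ) (h0P : (0:ℝ) ∈ P) (hTP : T ∈ P) (hPsub : ↑P ⊆ Icc (0:ℝ) T)
    {ε : ℝ} (hε : 0 < ε)
    (hosc : ∀ p ∈ P, ∀ x ∈ Ioo p (nxt P p), ‖hfun x - hfun p‖ ≤ ε) :
    |∫ x in Icc (0:ℝ) T, (inner ℝ (hfun x - hfun (partPt P x)) (v x) : ℝ) ∂μ|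
      ≤ ε * (eVariationOn f (Icc 0 T)).toReal := by
  have hSMh : StronglyMeasurable hfun := bv_stronglyMeasurable hfun hT hfBV hfext hfrc
  have hSMP : StronglyMeasurable (fun x => hfun (partPt P x)) :=
    stepApprox_stronglyMeasurable hfun hT h0P hTP hPsub
  -- closeness of φ_P
  have hcloseP : ∀ x ∈ Icc (0:ℝ) T, ‖hfun x - hfun (partPt P x)‖ ≤ ε := by
    intro x hx
    rcases stepApprox_close hfun h0P hTP hosc hx with h | h
    · exact h
    · rw [← h, sub_self, norm_zero]; exact hε.le
  refine le_of_forall_pos_le_add fun η hη => ?_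
  have hIv : (0:ℝ) ≤ ∫ x in Icc (0:ℝ) T, ‖v x‖ ∂μ := integral_nonneg (fun x => norm_nonneg _)
  set D := (eVariationOn f (Icc 0 T)).toReal + (∫ x in Icc (0:ℝ) T, ‖v x‖ ∂μ) + 1 with hD'
  have hD0 : 0 < D := by
    have : (0:ℝ) ≤ (eVariationOn f (Icc 0 T)).toReal := ENNReal.toReal_nonneg
    rw [hD']; linarith
  set δ := η / D with hδ
  have hδ0 : 0 < δ := div_pos hη hD0
  -- fine partition containing P
  obtain ⟨Q, h0Q, hTQ, hQsub, hPQ, hQosc⟩ :=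
    exists_good_partition hfun hT hfBV hfext hfrc P hPsub hδ0
  have hSMQ : StronglyMeasurable (fun x => hfun (partPt Q x)) :=
    stepApprox_stronglyMeasurable hfun hT h0Q hTQ hQsub
  have hcloseQ : ∀ x ∈ Icc (0:ℝ) T, ‖hfun x - hfun (partPt Q x)‖ ≤ δ := by
    intro x hx
    rcases stepApprox_close hfun h0Q hTQ hQosc hx with h | h
    · exact h
    · rw [← h, sub_self, norm_zero]; exact hδ0.le
  -- split the integrand
  set ψ1 : ℝ → H := fun x => hfun x - hfun (partPt Q x) with hψ1
  set ψ2 : ℝ → H := fun x => hfun (partPt Q x) - hfun (partPt P x) with hψ2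
  have hψ2const : ∀ p ∈ Q, ∀ x ∈ Ioo p (nxt Q p), ∀ y ∈ Ioo p (nxt Q p), ψ2 x = ψ2 y := by
    intro p hp x hx y hy
    -- partPt values agree on open pieces of Q, for both Q and P ⊆ Q
    have key : ∀ (R : Finset ℝ), R ⊆ Q → (0:ℝ) ∈ R →
        partPt R x = partPt R y := by
      intro R hRQ h0R
      have hp0 : (0:ℝ) ≤ p := (hQsub hp).1
      have mono : ∀ {a b : ℝ}, a ∈ Ioo p (nxt Q p) → b ∈ Ioo p (nxt Q p) → a ≤ b →
          partPt R a ≤ partPt R b := by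
        intro a b ha hb hab
        obtain ⟨hm1, hm2, hm3⟩ := partPt_spec h0R (hp0.trans ha.1.le)
        exact (partPt_spec h0R (hp0.trans hb.1.le)).2.2 _ hm1 (hm2.trans hab)
      rcases le_total x y with hxy | hxy
      · refine le_antisymm (mono hx hy hxy) ?_
        -- partPt R y ≤ partPt R x
        obtain ⟨hm1, hm2, hm3⟩ := partPt_spec h0R (hp0.trans hy.1.le)
        apply (partPt_spec h0R (hp0.trans hx.1.le)).2.2 _ hm1
        -- partPt R y ≤ x
        by_contra hc
        push_neg at hc
        have hryQ : partPt R y ∈ Q := hRQ hm1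
        have h1 : p < partPt R y := hx.1.trans hc
        have h2 := nxt_le hryQ h1
        exact absurd (h2.trans hm2) (not_le.2 hy.2)
      · refine le_antisymm ?_ (mono hy hx hxy)
        obtain ⟨hm1, hm2, hm3⟩ := partPt_spec h0R (hp0.trans hx.1.le)
        apply (partPt_spec h0R (hp0.trans hy.1.le)).2.2 _ hm1
        by_contra hc
        push_neg at hc
        have hrxQ : partPt R x ∈ Q := hRQ hm1
        have h1 : p < partPt R x := hy.1.trans hc
        have h2 := nxt_le hrxQ h1
        exact absurd (h2.trans hm2) (not_le.2 hx.2)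
    rw [hψ2]
    simp only []
    rw [key Q (Finset.Subset.refl Q) h0Q, key P hPQ h0P]
  have hψ2bound : ∀ x ∈ Icc (0:ℝ) T, ‖ψ2 x‖ ≤ ε + δ := by
    intro x hx
    rw [hψ2]
    simp only []
    calc ‖hfun (partPt Q x) - hfun (partPt P x)‖
        = ‖(hfun (partPt Q x) - hfun x) + (hfun x - hfun (partPt P x))‖ := by congr 1; abel
    _ ≤ ‖hfun (partPt Q x) - hfun x‖ + ‖hfun x - hfun (partPt P x)‖ := norm_add_le _ _
    _ ≤ δ + ε := by
        rw [← norm_sub_rev (hfun x)]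
        exact add_le_add (hcloseQ x hx) (hcloseP x hx)
    _ = ε + δ := by ring
  -- split the integral
  have hint1 : IntegrableOn (fun x => (inner ℝ (ψ1 x) (v x) : ℝ)) (Icc 0 T) μ := by
    apply Integrable.mono' ((hv.norm.const_mul δ).restrict (s := Icc 0 T))
    · exact ((hSMh.sub hSMQ).aestronglyMeasurable).inner hv.aestronglyMeasurable.restrict
    · filter_upwards [ae_restrict_mem measurableSet_Icc] with x hx
      calc ‖(inner ℝ (ψ1 x) (v x) : ℝ)‖ ≤ ‖ψ1 x‖ * ‖v x‖ := abs_real_inner_le_norm _ _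
      _ ≤ δ * ‖v x‖ := mul_le_mul_of_nonneg_right (hcloseQ x hx) (norm_nonneg _)
  have hint2 : IntegrableOn (fun x => (inner ℝ (ψ2 x) (v x) : ℝ)) (Icc 0 T) μ := by
    apply Integrable.mono' ((hv.norm.const_mul (ε + δ)).restrict (s := Icc 0 T))
    · exact ((hSMQ.sub hSMP).aestronglyMeasurable).inner hv.aestronglyMeasurable.restrict
    · filter_upwards [ae_restrict_mem measurableSet_Icc] with x hx
      calc ‖(inner ℝ (ψ2 x) (v x) : ℝ)‖ ≤ ‖ψ2 x‖ * ‖v x‖ := abs_real_inner_le_norm _ _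
      _ ≤ (ε + δ) * ‖v x‖ := mul_le_mul_of_nonneg_right (hψ2bound x hx) (norm_nonneg _)
  have hsplit : ∫ x in Icc (0:ℝ) T, (inner ℝ (hfun x - hfun (partPt P x)) (v x) : ℝ) ∂μ
      = (∫ x in Icc (0:ℝ) T, (inner ℝ (ψ1 x) (v x) : ℝ) ∂μ)
        + ∫ x in Icc (0:ℝ) T, (inner ℝ (ψ2 x) (v x) : ℝ) ∂μ := by
    rw [← integral_add hint1 hint2]
    apply integral_congr_ae
    filter_upwards with x
    rw [hψ1, hψ2]
    simp only []
    rw [← inner_add_left]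
    congr 1
    abel
  -- bound the two pieces
  have hb1 : |∫ x in Icc (0:ℝ) T, (inner ℝ (ψ1 x) (v x) : ℝ) ∂μ|
      ≤ δ * ∫ x in Icc (0:ℝ) T, ‖v x‖ ∂μ := by
    calc |∫ x in Icc (0:ℝ) T, (inner ℝ (ψ1 x) (v x) : ℝ) ∂μ|
        ≤ ∫ x in Icc (0:ℝ) T, |(inner ℝ (ψ1 x) (v x) : ℝ)| ∂μ := by
          simpa [Real.norm_eq_abs] using
            norm_integral_le_integral_norm (μ := μ.restrict (Icc 0 T))
              (fun x => (inner ℝ (ψ1 x) (v x) : ℝ))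
    _ ≤ ∫ x in Icc (0:ℝ) T, δ * ‖v x‖ ∂μ := by
        apply integral_mono_ae hint1.abs ((hv.norm.const_mul δ).restrict (s := Icc 0 T))
        filter_upwards [ae_restrict_mem measurableSet_Icc] with x hx
        calc |(inner ℝ (ψ1 x) (v x) : ℝ)| ≤ ‖ψ1 x‖ * ‖v x‖ := abs_real_inner_le_norm _ _
        _ ≤ δ * ‖v x‖ := mul_le_mul_of_nonneg_right (hcloseQ x hx) (norm_nonneg _)
    _ = δ * ∫ x in Icc (0:ℝ) T, ‖v x‖ ∂μ := by rw [integral_const_mul]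
  have hb2 : |∫ x in Icc (0:ℝ) T, (inner ℝ (ψ2 x) (v x) : ℝ) ∂μ|
      ≤ (ε + δ) * (eVariationOn f (Icc 0 T)).toReal := by
    exact key_step_bound f hT hBV hext μ v hv hD ψ2
      ((hSMQ.sub hSMP).aestronglyMeasurable) hψ2bound Q h0Q hTQ hQsub hψ2const
  rw [hsplit]
  have hVnn : (0:ℝ) ≤ (eVariationOn f (Icc 0 T)).toReal := ENNReal.toReal_nonneg
  calc |(∫ x in Icc (0:ℝ) T, (inner ℝ (ψ1 x) (v x) : ℝ) ∂μ)
        + ∫ x in Icc (0:ℝ) T, (inner ℝ (ψ2 x) (v x) : ℝ) ∂μ|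
      ≤ |∫ x in Icc (0:ℝ) T, (inner ℝ (ψ1 x) (v x) : ℝ) ∂μ|
        + |∫ x in Icc (0:ℝ) T, (inner ℝ (ψ2 x) (v x) : ℝ) ∂μ| := abs_add_le _ _
  _ ≤ δ * (∫ x in Icc (0:ℝ) T, ‖v x‖ ∂μ) + (ε + δ) * (eVariationOn f (Icc 0 T)).toReal :=
      add_le_add hb1 hb2
  _ ≤ ε * (eVariationOn f (Icc 0 T)).toReal + δ * D := by
      have e1 : δ * D = δ * (eVariationOn f (Icc 0 T)).toReal
          + δ * (∫ x in Icc (0:ℝ) T, ‖v x‖ ∂μ) + δ := by rw [hD']; ring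
      have e2 : (ε + δ) * (eVariationOn f (Icc 0 T)).toReal
          = ε * (eVariationOn f (Icc 0 T)).toReal
            + δ * (eVariationOn f (Icc 0 T)).toReal := by ring
      linarith [hδ0.le]
  _ = ε * (eVariationOn f (Icc 0 T)).toReal + η := by
      rw [hδ]
      field_simp
end Repr

section UnifLim

omit hT hBV hext in
lemma tendsto_rightLim_of_unif (g : ℕ → ℝ → H) (glim : ℝ → H) (hTpos : 0 < T)
    (hgBV : ∀ n, BoundedVariationOn (g n) (Icc 0 T))
    (hglimBV : BoundedVariationOn glim (Icc 0 T))
    (hgext : ∀ n, ∀ t : ℝ, (t ≤ 0 → g n t = g n 0) ∧ (T ≤ t → g n t = g n T))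
    (hglimext : ∀ t : ℝ, (t ≤ 0 → glim t = glim 0) ∧ (T ≤ t → glim t = glim T))
    (hunif : TendstoUniformlyOn g glim atTop (Icc 0 T)) {t : ℝ} (ht : t ∈ Icc (0:ℝ) T) :
    Tendsto (fun n => rightLim (g n) t) atTop (𝓝 (rightLim glim t)) := by
  rw [Metric.tendsto_atTop]
  intro ε hε
  have hev := Metric.tendstoUniformlyOn_iff.1 hunif (ε/2) (by linarith)
  obtain ⟨N, hN⟩ := Filter.eventually_atTop.1 hev
  refine ⟨N, fun n hn => ?_⟩
  rcases eq_or_lt_of_le ht.2 with htT | htT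
  · -- t = T
    rw [htT, rightLim_of_T_le (g n) (hgext n) le_rfl, rightLim_of_T_le glim hglimext le_rfl]
    rw [dist_comm]
    exact lt_of_lt_of_le (hN n hn T ⟨hTpos.le, le_rfl⟩) (by linarith)
  · have hd : Tendsto (fun x => dist (g n x) (glim x)) (𝓝[>] t)
        (𝓝 (dist (rightLim (g n) t) (rightLim glim t))) :=
      (tendsto_rightLim (g n) hTpos (hgBV n) (hgext n) t).dist
        (tendsto_rightLim glim hTpos hglimBV hglimext t)
    have hle : dist (rightLim (g n) t) (rightLim glim t) ≤ ε/2 := by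
      refine le_of_tendsto hd ?_
      filter_upwards [Ioo_mem_nhdsGT_of_mem ⟨le_refl t, htT⟩] with x hx
      rw [dist_comm]
      exact (hN n hn x ⟨ht.1.trans hx.1.le, hx.2.le⟩).le
    linarith

omit hT hBV hext in
lemma tendsto_leftLim_of_unif (g : ℕ → ℝ → H) (glim : ℝ → H) (hTpos : 0 < T)
    (hgBV : ∀ n, BoundedVariationOn (g n) (Icc 0 T))
    (hglimBV : BoundedVariationOn glim (Icc 0 T))
    (hgext : ∀ n, ∀ t : ℝ, (t ≤ 0 → g n t = g n 0) ∧ (T ≤ t → g n t = g n T))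
    (hglimext : ∀ t : ℝ, (t ≤ 0 → glim t = glim 0) ∧ (T ≤ t → glim t = glim T))
    (hunif : TendstoUniformlyOn g glim atTop (Icc 0 T)) {t : ℝ} (ht : t ∈ Icc (0:ℝ) T) :
    Tendsto (fun n => leftLim (g n) t) atTop (𝓝 (leftLim glim t)) := by
  rw [Metric.tendsto_atTop]
  intro ε hε
  have hev := Metric.tendstoUniformlyOn_iff.1 hunif (ε/2) (by linarith)
  obtain ⟨N, hN⟩ := Filter.eventually_atTop.1 hev
  refine ⟨N, fun n hn => ?_⟩
  rcases eq_or_lt_of_le ht.1 with ht0 | ht0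
  · -- t = 0
    rw [← ht0, leftLim_of_nonpos (g n) (hgext n) le_rfl, leftLim_of_nonpos glim hglimext le_rfl]
    rw [dist_comm]
    exact lt_of_lt_of_le (hN n hn 0 ⟨le_rfl, hTpos.le⟩) (by linarith)
  · have hd : Tendsto (fun x => dist (g n x) (glim x)) (𝓝[<] t)
        (𝓝 (dist (leftLim (g n) t) (leftLim glim t))) :=
      (tendsto_leftLim (g n) hTpos (hgBV n) (hgext n) t).dist
        (tendsto_leftLim glim hTpos hglimBV hglimext t)
    have hle : dist (leftLim (g n) t) (leftLim glim t) ≤ ε/2 := by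
      refine le_of_tendsto hd ?_
      filter_upwards [Ioo_mem_nhdsLT_of_mem ⟨ht0, le_refl t⟩] with x hx
      rw [dist_comm]
      exact (hN n hn x ⟨hx.1.le, hx.2.le.trans ht.2⟩).le
    linarith

end UnifLim

end StieltjesAux
end Aux

theorem stmt_14 [CompleteSpace H] (T : ℝ) (hT : 0 < T)
    (g : ℕ → ℝ → H) (glim h : ℝ → H)
    -- all functions are extended constantly outside `[0,T]`
    (hgext : ∀ n, ∀ t : ℝ, (t ≤ 0 → g n t = g n 0) ∧ (T ≤ t → g n t = g n T))
    (hglimext : ∀ t : ℝ, (t ≤ 0 → glim t = glim 0) ∧ (T ≤ t → glim t = glim T))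
    (hhext : ∀ t : ℝ, (t ≤ 0 → h t = h 0) ∧ (T ≤ t → h t = h T))
    -- bounded variation
    (hgBV : ∀ n, BoundedVariationOn (g n) (Set.Icc 0 T))
    (hglimBV : BoundedVariationOn glim (Set.Icc 0 T))
    (hhBV : BoundedVariationOn h (Set.Icc 0 T))
    -- `h` is right-continuous
    (hrc : ∀ t ∈ Set.Ico (0 : ℝ) T, ContinuousWithinAt h (Set.Ici t) t)
    -- uniform convergence
    (hunif : TendstoUniformlyOn g glim Filter.atTop (Set.Icc 0 T))
    -- uniformly bounded variations
    (hsupV : ∃ V : ℝ, ∀ n, eVariationOn (g n) (Set.Icc 0 T) ≤ ENNReal.ofReal V)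
    -- differential measures `Dg_n = v_n μ_n`, `Dglim = v μ`
    (μn : ℕ → Measure ℝ) (vn : ℕ → ℝ → H) (μ : Measure ℝ) (v : ℝ → H)
    (hμn : ∀ n, IsFiniteMeasure (μn n)) (hμ : IsFiniteMeasure μ)
    (hμnconc : ∀ n, (μn n) (Set.Icc (0 : ℝ) T)ᶜ = 0)
    (hμconc : μ (Set.Icc (0 : ℝ) T)ᶜ = 0)
    (hvn : ∀ n, Integrable (vn n) (μn n)) (hv : Integrable v μ)
    (hDgn : ∀ n, IsDiffMeasure (g n) (μn n) (vn n))
    (hDg : IsDiffMeasure glim μ v) :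
    Filter.Tendsto
      (fun n => ∫ t in Set.Icc (0 : ℝ) T, (inner ℝ (h t) (vn n t) : ℝ) ∂(μn n))
      Filter.atTop
      (nhds (∫ t in Set.Icc (0 : ℝ) T, (inner ℝ (h t) (v t) : ℝ) ∂μ)) := by
  classical
  haveI := hμ
  obtain ⟨V, hV⟩ := hsupV
  set V₁ : ℝ := (ENNReal.ofReal V).toReal with hV₁
  have hVr : ∀ n, (eVariationOn (g n) (Set.Icc 0 T)).toReal ≤ V₁ :=
    fun n => ENNReal.toReal_mono ENNReal.ofReal_ne_top (hV n)
  set V₂ : ℝ := (eVariationOn glim (Set.Icc 0 T)).toReal with hV₂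
  have hV₁0 : (0:ℝ) ≤ V₁ := ENNReal.toReal_nonneg
  have hV₂0 : (0:ℝ) ≤ V₂ := ENNReal.toReal_nonneg
  have hSMh : StronglyMeasurable h := StieltjesAux.bv_stronglyMeasurable h hT hhBV hhext hrc
  set Ch : ℝ := ‖h 0‖ + (eVariationOn h (Set.Icc 0 T)).toReal with hCh
  have hChb : ∀ x ∈ Set.Icc (0:ℝ) T, ‖h x‖ ≤ Ch :=
    fun x hx => StieltjesAux.bv_norm_bound h hhBV hx
  rw [Metric.tendsto_atTop]
  intro ε' hε'
  set ε := ε' / (2 * (V₁ + V₂ + 1)) with hεdef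
  have hε : 0 < ε := div_pos hε' (by linarith)
  have hεid : ε * (V₁ + V₂ + 1) = ε'/2 := by
    rw [hεdef]
    field_simp
  obtain ⟨P, h0P, hTP, hPsub, -, hosc⟩ :=
    StieltjesAux.exists_good_partition h hT hhBV hhext hrc ∅ (by simp) hε
  obtain ⟨m, q, hq0, hqm, hmono, hmemP, hsurj, hnxt, hqtop⟩ :=
    StieltjesAux.exists_sorted_enum P h0P hTP hPsub
  have hmem : ∀ i ≤ m, q i ∈ Set.Icc (0:ℝ) T := fun i hi => hPsub (hmemP i hi)
  set φ : ℝ → H := fun x => h (StieltjesAux.partPt P x) with hφ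
  have hSMφ : StronglyMeasurable φ :=
    StieltjesAux.stepApprox_stronglyMeasurable h hT h0P hTP hPsub
  have hφb : ∀ x ∈ Set.Icc (0:ℝ) T, ‖φ x‖ ≤ Ch := by
    intro x hx
    have hsp := StieltjesAux.partPt_spec h0P hx.1
    exact hChb _ (hPsub hsp.1)
  have hφconst : ∀ i < m, ∀ x ∈ Set.Ioo (q i) (q (i+1)), φ x = φ ((q i + q (i+1))/2) := by
    intro i hi x hx
    have hmid : (q i + q (i+1))/2 ∈ Set.Ioo (q i) (q (i+1)) :=
      ⟨by linarith [hmono i hi], by linarith [hmono i hi]⟩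
    rw [hφ]
    simp only []
    rw [StieltjesAux.partPt_Ioo (hmemP i hi.le) hx.1 (by rw [hnxt i hi]; exact hx.2),
      StieltjesAux.partPt_Ioo (hmemP i hi.le) hmid.1 (by rw [hnxt i hi]; exact hmid.2)]
  -- representation of the step-function integrals
  set SL : ℝ := ∑ i ∈ Finset.range (m+1),
      ((inner ℝ (φ (q i)) (Function.rightLim glim (q i) - Function.leftLim glim (q i)) : ℝ)
        + (if i < m then
            (inner ℝ (φ ((q i + q (i+1))/2))
              (Function.leftLim glim (q (i+1)) - Function.rightLim glim (q i)) : ℝ)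
          else 0)) with hSL
  set Sn : ℕ → ℝ := fun n => ∑ i ∈ Finset.range (m+1),
      ((inner ℝ (φ (q i)) (Function.rightLim (g n) (q i) - Function.leftLim (g n) (q i)) : ℝ)
        + (if i < m then
            (inner ℝ (φ ((q i + q (i+1))/2))
              (Function.leftLim (g n) (q (i+1)) - Function.rightLim (g n) (q i)) : ℝ)
          else 0)) with hSn
  have hreprL : ∫ x in Set.Icc (0:ℝ) T, (inner ℝ (φ x) (v x) : ℝ) ∂μ = SL :=
    StieltjesAux.step_integral_repr glim hT hglimBV hglimext μ v hv hDg φ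
      hSMφ.aestronglyMeasurable hφb hq0 hqm hmono hmem hqtop hφconst
  have hreprn : ∀ n, ∫ x in Set.Icc (0:ℝ) T, (inner ℝ (φ x) (vn n x) : ℝ) ∂(μn n) = Sn n := by
    intro n
    haveI := hμn n
    exact StieltjesAux.step_integral_repr (g n) hT (hgBV n) (hgext n) (μn n) (vn n) (hvn n)
      (hDgn n) φ hSMφ.aestronglyMeasurable hφb hq0 hqm hmono hmem hqtop hφconst
  -- convergence of the sums
  have htendS : Filter.Tendsto Sn Filter.atTop (nhds SL) := by
    rw [hSn, hSL]
    apply tendsto_finset_sum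
    intro i hi
    have him : i ≤ m := by have := Finset.mem_range.1 hi; omega
    apply Filter.Tendsto.add
    · exact Filter.Tendsto.inner tendsto_const_nhds
        ((StieltjesAux.tendsto_rightLim_of_unif g glim hT hgBV hglimBV hgext hglimext hunif
            (hmem i him)).sub
          (StieltjesAux.tendsto_leftLim_of_unif g glim hT hgBV hglimBV hgext hglimext hunif
            (hmem i him)))
    · rcases lt_or_ge i m with hilt | hige
      · simp only [if_pos hilt]
        exact Filter.Tendsto.inner tendsto_const_nhds
          ((StieltjesAux.tendsto_leftLim_of_unif g glim hT hgBV hglimBV hgext hglimext hunif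
              (hmem (i+1) hilt)).sub
            (StieltjesAux.tendsto_rightLim_of_unif g glim hT hgBV hglimBV hgext hglimext hunif
              (hmem i him)))
      · simp only [if_neg (by omega : ¬ i < m)]
        exact tendsto_const_nhds
  obtain ⟨N, hNS⟩ := (Metric.tendsto_atTop.1 htendS) (ε'/2) (by linarith)
  refine ⟨N, fun n hn => ?_⟩
  haveI := hμn n
  -- splitting of integrals
  have hδbd : ∀ x ∈ Set.Icc (0:ℝ) T, ‖h x - φ x‖ ≤ Ch + Ch := by
    intro x hx
    calc ‖h x - φ x‖ ≤ ‖h x‖ + ‖φ x‖ := norm_sub_le _ _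
    _ ≤ Ch + Ch := add_le_add (hChb x hx) (hφb x hx)
  have hintφn : IntegrableOn (fun x => (inner ℝ (φ x) (vn n x) : ℝ)) (Set.Icc 0 T) (μn n) := by
    apply Integrable.mono' (((hvn n).norm.const_mul Ch).restrict (s := Set.Icc 0 T))
    · exact hSMφ.aestronglyMeasurable.inner (hvn n).aestronglyMeasurable.restrict
    · filter_upwards [ae_restrict_mem measurableSet_Icc] with x hx
      calc ‖(inner ℝ (φ x) (vn n x) : ℝ)‖ ≤ ‖φ x‖ * ‖vn n x‖ := abs_real_inner_le_norm _ _
      _ ≤ Ch * ‖vn n x‖ := mul_le_mul_of_nonneg_right (hφb x hx) (norm_nonneg _)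
  have hintδn : IntegrableOn (fun x => (inner ℝ (h x - φ x) (vn n x) : ℝ)) (Set.Icc 0 T) (μn n) := by
    apply Integrable.mono' (((hvn n).norm.const_mul (Ch + Ch)).restrict (s := Set.Icc 0 T))
    · exact (hSMh.sub hSMφ).aestronglyMeasurable.inner (hvn n).aestronglyMeasurable.restrict
    · filter_upwards [ae_restrict_mem measurableSet_Icc] with x hx
      calc ‖(inner ℝ (h x - φ x) (vn n x) : ℝ)‖ ≤ ‖h x - φ x‖ * ‖vn n x‖ :=
        abs_real_inner_le_norm _ _
      _ ≤ (Ch + Ch) * ‖vn n x‖ := mul_le_mul_of_nonneg_right (hδbd x hx) (norm_nonneg _)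
  have hintφL : IntegrableOn (fun x => (inner ℝ (φ x) (v x) : ℝ)) (Set.Icc 0 T) μ := by
    apply Integrable.mono' ((hv.norm.const_mul Ch).restrict (s := Set.Icc 0 T))
    · exact hSMφ.aestronglyMeasurable.inner hv.aestronglyMeasurable.restrict
    · filter_upwards [ae_restrict_mem measurableSet_Icc] with x hx
      calc ‖(inner ℝ (φ x) (v x) : ℝ)‖ ≤ ‖φ x‖ * ‖v x‖ := abs_real_inner_le_norm _ _
      _ ≤ Ch * ‖v x‖ := mul_le_mul_of_nonneg_right (hφb x hx) (norm_nonneg _)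
  have hintδL : IntegrableOn (fun x => (inner ℝ (h x - φ x) (v x) : ℝ)) (Set.Icc 0 T) μ := by
    apply Integrable.mono' ((hv.norm.const_mul (Ch + Ch)).restrict (s := Set.Icc 0 T))
    · exact (hSMh.sub hSMφ).aestronglyMeasurable.inner hv.aestronglyMeasurable.restrict
    · filter_upwards [ae_restrict_mem measurableSet_Icc] with x hx
      calc ‖(inner ℝ (h x - φ x) (v x) : ℝ)‖ ≤ ‖h x - φ x‖ * ‖v x‖ := abs_real_inner_le_norm _ _
      _ ≤ (Ch + Ch) * ‖v x‖ := mul_le_mul_of_nonneg_right (hδbd x hx) (norm_nonneg _)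
  have hsplitn : ∫ t in Set.Icc (0:ℝ) T, (inner ℝ (h t) (vn n t) : ℝ) ∂(μn n)
      = (∫ x in Set.Icc (0:ℝ) T, (inner ℝ (φ x) (vn n x) : ℝ) ∂(μn n))
        + ∫ x in Set.Icc (0:ℝ) T, (inner ℝ (h x - φ x) (vn n x) : ℝ) ∂(μn n) := by
    rw [← integral_add hintφn hintδn]
    apply integral_congr_ae
    filter_upwards with x
    rw [← inner_add_left]
    congr 1
    abel
  have hsplitL : ∫ t in Set.Icc (0:ℝ) T, (inner ℝ (h t) (v t) : ℝ) ∂μ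
      = (∫ x in Set.Icc (0:ℝ) T, (inner ℝ (φ x) (v x) : ℝ) ∂μ)
        + ∫ x in Set.Icc (0:ℝ) T, (inner ℝ (h x - φ x) (v x) : ℝ) ∂μ := by
    rw [← integral_add hintφL hintδL]
    apply integral_congr_ae
    filter_upwards with x
    rw [← inner_add_left]
    congr 1
    abel
  -- error bounds
  have herrn : |∫ x in Set.Icc (0:ℝ) T, (inner ℝ (h x - φ x) (vn n x) : ℝ) ∂(μn n)| ≤ ε * V₁ := by
    have hφ' : ∀ x, h x - φ x = h x - h (StieltjesAux.partPt P x) := fun x => by rw [hφ]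
    calc |∫ x in Set.Icc (0:ℝ) T, (inner ℝ (h x - φ x) (vn n x) : ℝ) ∂(μn n)|
        ≤ ε * (eVariationOn (g n) (Set.Icc 0 T)).toReal := by
          simp only [hφ']
          exact StieltjesAux.error_bound (g n) hT (hgBV n) (hgext n) (μn n) (vn n) (hvn n)
            (hDgn n) h hhBV hhext hrc P h0P hTP hPsub hε hosc
    _ ≤ ε * V₁ := mul_le_mul_of_nonneg_left (hVr n) hε.le
  have herrL : |∫ x in Set.Icc (0:ℝ) T, (inner ℝ (h x - φ x) (v x) : ℝ) ∂μ| ≤ ε * V₂ := by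
    have hφ' : ∀ x, h x - φ x = h x - h (StieltjesAux.partPt P x) := fun x => by rw [hφ]
    simp only [hφ']
    exact StieltjesAux.error_bound glim hT hglimBV hglimext μ v hv hDg h hhBV hhext hrc
      P h0P hTP hPsub hε hosc
  -- conclude
  rw [Real.dist_eq]
  have heq : (∫ t in Set.Icc (0:ℝ) T, (inner ℝ (h t) (vn n t) : ℝ) ∂(μn n))
      - ∫ t in Set.Icc (0:ℝ) T, (inner ℝ (h t) (v t) : ℝ) ∂μ
      = (Sn n - SL)
        + ((∫ x in Set.Icc (0:ℝ) T, (inner ℝ (h x - φ x) (vn n x) : ℝ) ∂(μn n))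
          - ∫ x in Set.Icc (0:ℝ) T, (inner ℝ (h x - φ x) (v x) : ℝ) ∂μ) := by
    rw [hsplitn, hsplitL, hreprn n, hreprL]
    ring
  rw [heq]
  have h1 := hNS n hn
  rw [Real.dist_eq] at h1
  have h2 := abs_add_le (Sn n - SL)
    ((∫ x in Set.Icc (0:ℝ) T, (inner ℝ (h x - φ x) (vn n x) : ℝ) ∂(μn n))
      - ∫ x in Set.Icc (0:ℝ) T, (inner ℝ (h x - φ x) (v x) : ℝ) ∂μ)
  have h3 := abs_sub (∫ x in Set.Icc (0:ℝ) T, (inner ℝ (h x - φ x) (vn n x) : ℝ) ∂(μn n))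
    (∫ x in Set.Icc (0:ℝ) T, (inner ℝ (h x - φ x) (v x) : ℝ) ∂μ)
  nlinarith [hε.le]
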